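/- arXiv:1105.2807 — 3 statements merged into one kernel-verified Lean document; each statement's English description precedes it below -/
import Mathlib

section
/- The integral ∫_{(ℝ∖{0})²} 1 / ( max{1, |y₁|, |y₂|, |y₁y₂|^{−1}} · |y₁y₂| ) dy₁ dy₂ equals 36, where dy₁ dy₂ is Lebesgue measure on ℝ². -/
open MeasureTheory

open Set Real


lemma lintegral_comp_abs' {F : ℝ → ENNReal} (hF : Measurable F) :
    ∫⁻ x, F |x| = 2 * ∫⁻ x in Ioi (0:ℝ), F x := by
  have hmeas : Measurable fun x : ℝ => F |x| := hF.comp measurable_abs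
  have h1 : ∫⁻ x in Iio (0:ℝ), F |x| = ∫⁻ x in Ioi (0:ℝ), F x := by
    calc ∫⁻ x in Iio (0:ℝ), F |x|
        = ∫⁻ x in Iio (0:ℝ), F |x| ∂(Measure.map Neg.neg volume) := by
          rw [Measure.map_neg_eq_self]
      _ = ∫⁻ x in Neg.neg ⁻¹' Iio (0:ℝ), F |(-x)| := by
          rw [setLIntegral_map measurableSet_Iio hmeas measurable_neg]
      _ = ∫⁻ x in Ioi (0:ℝ), F |(-x)| := by
          congr 1
          ext x; simp
      _ = ∫⁻ x in Ioi (0:ℝ), F x := by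
          refine setLIntegral_congr_fun measurableSet_Ioi (fun x hx => ?_)
          rw [abs_neg, abs_of_pos hx]
  have h2 : ∫⁻ x in Ici (0:ℝ), F |x| = ∫⁻ x in Ioi (0:ℝ), F x := by
    rw [← restrict_Ioi_eq_restrict_Ici]
    refine setLIntegral_congr_fun measurableSet_Ioi (fun x hx => ?_)
    rw [abs_of_pos hx]
  calc ∫⁻ x, F |x|
      = (∫⁻ x in Iio (0:ℝ), F |x|) + ∫⁻ x in (Iio (0:ℝ))ᶜ, F |x| := by
        rw [lintegral_add_compl _ measurableSet_Iio]
    _ = 2 * ∫⁻ x in Ioi (0:ℝ), F x := by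
        rw [compl_Iio, h1, h2, two_mul]

noncomputable def G (c t : ℝ) : ℝ :=
  (max (max 1 c) (max t (c*t)⁻¹) * (c*t))⁻¹

lemma le_inv_aux {a x : ℝ} (hx : 0 < x) (h : a * x ≤ 1) : a ≤ x⁻¹ := by
  rw [← one_div]; exact (le_div_iff₀ hx).mpr h

lemma inv_le_aux {a x : ℝ} (hx : 0 < x) (h : 1 ≤ a * x) : x⁻¹ ≤ a := by
  rw [← one_div]; exact (div_le_iff₀ hx).mpr h

lemma G_eq_one {c t : ℝ} (hc : 0 < c) (ht : 0 < t) (h1 : c*t ≤ 1) (h2 : c*(c*t) ≤ 1)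
    (h3 : t*(c*t) ≤ 1) : G c t = 1 := by
  have hct : 0 < c*t := mul_pos hc ht
  have e1 : max t (c*t)⁻¹ = (c*t)⁻¹ := max_eq_right (le_inv_aux hct h3)
  have e2 : max (max 1 c) ((c*t)⁻¹) = (c*t)⁻¹ :=
    max_eq_right (max_le (le_inv_aux hct (by rw [one_mul]; exact h1)) (le_inv_aux hct h2))
  rw [G, e1, e2, inv_mul_cancel₀ hct.ne', inv_one]

lemma G_eq_top {c t : ℝ} (hc : 0 < c) (h1 : 1 ≤ t) (h2 : c ≤ t) (h3 : 1 ≤ t*(c*t)) :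
    G c t = (c*t^2)⁻¹ := by
  have ht : 0 < t := lt_of_lt_of_le one_pos h1
  have hct : 0 < c*t := mul_pos hc ht
  have e1 : max t (c*t)⁻¹ = t := max_eq_left (inv_le_aux hct h3)
  have e2 : max (max 1 c) t = t := max_eq_right (max_le h1 h2)
  rw [G, e1, e2]
  congr 1; ring

lemma G_eq_mid {c t : ℝ} (hc : 1 ≤ c) (ht : 0 < t) (h2 : t ≤ c) (h3 : 1 ≤ c*(c*t)) :
    G c t = (c^2*t)⁻¹ := by
  have hc0 : 0 < c := lt_of_lt_of_le one_pos hc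
  have hct : 0 < c*t := mul_pos hc0 ht
  have e1 : max (max 1 c) (max t (c*t)⁻¹) = c := by
    rw [max_eq_right hc]
    exact max_eq_left (max_le h2 (inv_le_aux hct h3))
  rw [G, e1]
  congr 1; ring

lemma lint_const_Ioc {r : ℝ} :
    ∫⁻ t in Ioc (0:ℝ) r, ENNReal.ofReal 1 = ENNReal.ofReal r := by
  rw [setLIntegral_const, Real.volume_Ioc, ENNReal.ofReal_one, one_mul, sub_zero]

lemma tail_integrable {c r : ℝ} (hr : 0 < r) :
    IntegrableOn (fun t : ℝ => (c*t^2)⁻¹) (Ioi r) := by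
  have key : ∀ t ∈ Ioi r, c⁻¹ * t ^ (-2:ℝ) = (c*t^2)⁻¹ := by
    intro t ht
    have ht0 : 0 < t := hr.trans ht
    rw [Real.rpow_neg ht0.le, show ((2:ℝ)) = ((2:ℕ):ℝ) by norm_num, Real.rpow_natCast,
      mul_inv]
  exact IntegrableOn.congr_fun
      ((integrableOn_Ioi_rpow_of_lt (by norm_num : (-2:ℝ) < -1) hr).const_mul c⁻¹)
      key measurableSet_Ioi

lemma tail_integral {c r : ℝ} (hr : 0 < r) :
    ∫ t in Ioi r, (c*t^2)⁻¹ = c⁻¹ * r⁻¹ := by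
  have key : ∀ t ∈ Ioi r, c⁻¹ * t ^ (-2:ℝ) = (c*t^2)⁻¹ := by
    intro t ht
    have ht0 : 0 < t := hr.trans ht
    rw [Real.rpow_neg ht0.le, show ((2:ℝ)) = ((2:ℕ):ℝ) by norm_num, Real.rpow_natCast,
      mul_inv]
  rw [← setIntegral_congr_fun measurableSet_Ioi key, integral_const_mul,
    integral_Ioi_rpow_of_lt (by norm_num) hr]
  norm_num [Real.rpow_neg_one]

lemma tail_lintegral {c r : ℝ} (hc : 0 < c) (hr : 0 < r) :
    ∫⁻ t in Ioi r, ENNReal.ofReal ((c*t^2)⁻¹) = ENNReal.ofReal (c⁻¹ * r⁻¹) := by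
  rw [← tail_integral (c := c) hr]
  rw [← ofReal_integral_eq_lintegral_ofReal (tail_integrable hr)]
  exact ae_of_all _ fun t => by positivity

lemma inner_small {c : ℝ} (hc : 0 < c) (hc1 : c ≤ 1) :
    ∫⁻ t in Ioi (0:ℝ), ENNReal.ofReal (G c t) = ENNReal.ofReal (2 / Real.sqrt c) := by
  set r := (Real.sqrt c)⁻¹ with hr_def
  have hs : 0 < Real.sqrt c := Real.sqrt_pos.mpr hc
  have hss : Real.sqrt c * Real.sqrt c = c := Real.mul_self_sqrt hc.le
  have hs1 : Real.sqrt c ≤ 1 := by nlinarith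
  have hr0 : 0 < r := inv_pos.mpr hs
  have hr1 : 1 ≤ r := le_inv_aux hs (by rw [one_mul]; exact hs1)
  have hcr : c * r = Real.sqrt c := by
    rw [hr_def]; field_simp; rw [sq, hss]
  have hcrr : c * r * r = 1 := by
    rw [hcr, hr_def]; exact mul_inv_cancel₀ hs.ne'
  have hsplit : Ioi (0:ℝ) = Ioc 0 r ∪ Ioi r := (Ioc_union_Ioi_eq_Ioi hr0.le).symm
  rw [hsplit, lintegral_union measurableSet_Ioi (Ioc_disjoint_Ioi le_rfl)]
  have piece1 : ∫⁻ t in Ioc (0:ℝ) r, ENNReal.ofReal (G c t) = ENNReal.ofReal r := by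
    have hpt : ∀ t ∈ Ioc (0:ℝ) r, ENNReal.ofReal (G c t) = ENNReal.ofReal 1 := by
      intro t ht
      have h0 : 0 ≤ c * t := mul_nonneg hc.le ht.1.le
      have hct_le : c * t ≤ Real.sqrt c := by
        rw [← hcr]; exact mul_le_mul_of_nonneg_left ht.2 hc.le
      have hrs : r * Real.sqrt c = 1 := by rw [← hcr]; rw [← hcrr]; ring
      rw [G_eq_one hc ht.1 ?_ ?_ ?_]
      · nlinarith [hct_le, hs1]
      · nlinarith [hct_le, hs1, h0]
      · calc t * (c*t) ≤ r * Real.sqrt c :=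
              mul_le_mul ht.2 hct_le h0 hr0.le
          _ = 1 := hrs
    rw [setLIntegral_congr_fun measurableSet_Ioc hpt, lint_const_Ioc]
  have piece2 : ∫⁻ t in Ioi r, ENNReal.ofReal (G c t) = ENNReal.ofReal r := by
    have hpt : ∀ t ∈ Ioi r, ENNReal.ofReal (G c t) = ENNReal.ofReal ((c*t^2)⁻¹) := by
      intro t ht
      have ht' : r < t := ht
      have hx1 : c*r ≤ c*t := mul_le_mul_of_nonneg_left ht'.le hc.le
      have hx2 : r*(c*r) = 1 := by rw [← hcrr]; ring
      have ht0 : 0 < t := hr0.trans ht'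
      rw [G_eq_top hc (hr1.trans ht'.le) (by nlinarith)
        (by calc (1:ℝ) = r*(c*r) := hx2.symm
              _ ≤ t*(c*r) := mul_le_mul_of_nonneg_right ht'.le (mul_pos hc hr0).le
              _ ≤ t*(c*t) := mul_le_mul_of_nonneg_left hx1 ht0.le)]
    rw [setLIntegral_congr_fun measurableSet_Ioi hpt, tail_lintegral hc hr0]
    congr 1
    rw [hr_def, inv_inv]
    field_simp
    rw [sq, hss]
  rw [piece1, piece2, ← ENNReal.ofReal_add hr0.le hr0.le]
  congr 1
  rw [hr_def]
  field_simp
  ring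

lemma mid_lintegral {c : ℝ} (hc1 : 1 ≤ c) :
    ∫⁻ t in Ioc ((c^2)⁻¹) c, ENNReal.ofReal ((c^2*t)⁻¹)
      = ENNReal.ofReal ((c^2)⁻¹ * (3 * Real.log c)) := by
  have hc : 0 < c := lt_of_lt_of_le one_pos hc1
  have hp0 : 0 < (c^2)⁻¹ := by positivity
  have hpc : (c^2)⁻¹ ≤ c := inv_le_aux (by positivity) (by nlinarith)
  have hcont : ContinuousOn (fun t : ℝ => (c^2*t)⁻¹) (Icc ((c^2)⁻¹) c) := by
    refine ((continuous_const.mul continuous_id).continuousOn).inv₀ ?_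
    intro t ht
    have : 0 < t := lt_of_lt_of_le hp0 ht.1
    exact mul_ne_zero (pow_pos hc 2).ne' this.ne'
  have hint : IntegrableOn (fun t : ℝ => (c^2*t)⁻¹) (Ioc ((c^2)⁻¹) c) :=
    (hcont.integrableOn_Icc).mono_set Ioc_subset_Icc_self
  have hval : ∫ t in Ioc ((c^2)⁻¹) c, (c^2*t)⁻¹ = (c^2)⁻¹ * (3 * Real.log c) := by
    rw [← intervalIntegral.integral_of_le hpc]
    have : ∀ x, (c^2*x)⁻¹ = (c^2)⁻¹ * x⁻¹ := fun x => by rw [mul_inv]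
    simp_rw [this]
    rw [intervalIntegral.integral_const_mul, integral_inv ?_]
    · congr 1
      rw [div_inv_eq_mul, show c * c^2 = c^3 by ring, Real.log_pow]
      norm_num
    · rw [uIcc_of_le hpc]
      intro h
      exact absurd h.1 (not_le.mpr hp0)
  rw [← hval, ← ofReal_integral_eq_lintegral_ofReal hint]
  refine (ae_restrict_iff' measurableSet_Ioc).mpr (ae_of_all _ fun t ht => ?_)
  have ht0 : 0 < t := hp0.trans_le ht.1.le
  positivity

lemma inner_large {c : ℝ} (hc1 : 1 ≤ c) :
    ∫⁻ t in Ioi (0:ℝ), ENNReal.ofReal (G c t)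
      = ENNReal.ofReal ((2 + 3 * Real.log c) / c^2) := by
  have hc : 0 < c := lt_of_lt_of_le one_pos hc1
  set p := (c^2)⁻¹ with hp_def
  have hp0 : 0 < p := by positivity
  have hp1 : p ≤ 1 := by rw [hp_def]; exact inv_le_one_of_one_le₀ (by nlinarith)
  have hpc : p ≤ c := by rw [hp_def]; exact inv_le_aux (by positivity) (by nlinarith)
  have hpcc : c^2 * p = 1 := mul_inv_cancel₀ (by positivity)
  have hsplit : Ioi (0:ℝ) = Ioc 0 p ∪ (Ioc p c ∪ Ioi c) := by
    rw [Ioc_union_Ioi_eq_Ioi hpc, Ioc_union_Ioi_eq_Ioi hp0.le]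
  rw [hsplit, lintegral_union (measurableSet_Ioc.union measurableSet_Ioi)
      (by rw [Ioc_union_Ioi_eq_Ioi hpc]; exact Ioc_disjoint_Ioi le_rfl),
    lintegral_union measurableSet_Ioi (Ioc_disjoint_Ioi le_rfl)]
  have piece1 : ∫⁻ t in Ioc (0:ℝ) p, ENNReal.ofReal (G c t) = ENNReal.ofReal p := by
    have hpt : ∀ t ∈ Ioc (0:ℝ) p, ENNReal.ofReal (G c t) = ENNReal.ofReal 1 := by
      intro t ht
      have h0 : 0 ≤ c * t := mul_nonneg hc.le ht.1.le
      have hx : c^2 * t ≤ 1 := by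
        calc c^2 * t ≤ c^2 * p := by nlinarith [ht.2]
          _ = 1 := hpcc
      rw [G_eq_one hc ht.1 ?_ ?_ ?_]
      · nlinarith [ht.1, ht.2]
      · nlinarith
      · nlinarith [ht.1, ht.2]
    rw [setLIntegral_congr_fun measurableSet_Ioc hpt, lint_const_Ioc]
  have piece2 : ∫⁻ t in Ioc p c, ENNReal.ofReal (G c t)
      = ENNReal.ofReal (p * (3 * Real.log c)) := by
    have hpt : ∀ t ∈ Ioc p c, ENNReal.ofReal (G c t) = ENNReal.ofReal ((c^2*t)⁻¹) := by
      intro t ht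
      have ht0 : 0 < t := hp0.trans_le ht.1.le
      rw [G_eq_mid hc1 ht0 ht.2 (by nlinarith [ht.1, hpcc])]
    rw [setLIntegral_congr_fun measurableSet_Ioc hpt, mid_lintegral hc1]
  have piece3 : ∫⁻ t in Ioi c, ENNReal.ofReal (G c t) = ENNReal.ofReal p := by
    have hpt : ∀ t ∈ Ioi c, ENNReal.ofReal (G c t) = ENNReal.ofReal ((c*t^2)⁻¹) := by
      intro t ht
      have ht' : c < t := ht
      have h1 : 1 ≤ t := hc1.trans ht'.le
      have h2 : 1 ≤ c*t := by nlinarith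
      rw [G_eq_top hc h1 ht'.le (by nlinarith)]
    rw [setLIntegral_congr_fun measurableSet_Ioi hpt, tail_lintegral hc hc]
    congr 1
    rw [hp_def]; rw [← mul_inv]; ring_nf
  rw [piece1, piece2, piece3]
  have hlog : 0 ≤ Real.log c := Real.log_nonneg hc1
  have hb : 0 ≤ p * (3 * Real.log c) := mul_nonneg hp0.le (by linarith)
  rw [← ENNReal.ofReal_add hb hp0.le, ← ENNReal.ofReal_add hp0.le (add_nonneg hb hp0.le)]
  congr 1
  rw [hp_def]
  field_simp
  ring

noncomputable def K (c : ℝ) : ℝ :=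
  if c ≤ 1 then 2 / Real.sqrt c else (2 + 3 * Real.log c) / c^2

lemma K_measurable : Measurable K := by
  unfold K
  exact Measurable.ite (measurableSet_le measurable_id measurable_const)
    (measurable_const.div Real.continuous_sqrt.measurable)
    ((measurable_const.add (measurable_const.mul Real.measurable_log)).div
      (measurable_id.pow_const 2))

lemma K_nonneg (c : ℝ) : 0 ≤ K c := by
  unfold K
  split_ifs with h
  · positivity
  · have : 0 ≤ Real.log c := Real.log_nonneg (le_of_not_ge h)
    positivity

-- derivative facts for log x / x^2 on Ioi 1
lemma hasDeriv_neglog {x : ℝ} (hx : x ∈ Ici (1:ℝ)) :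
    HasDerivAt (fun a => -(Real.log a + 1)/a) (Real.log x / x^2) x := by
  have hx0 : 0 < x := lt_of_lt_of_le one_pos hx
  have h := (((Real.hasDerivAt_log hx0.ne').add_const 1).neg).div (hasDerivAt_id x) hx0.ne'
  have e : (-x⁻¹ * id x - (-fun x => Real.log x + 1) x * 1) / id x ^ 2 = Real.log x / x^2 := by
    simp only [id, Pi.neg_apply]
    field_simp
    ring
  exact e ▸ h

lemma tendsto_neglog :
    Filter.Tendsto (fun a : ℝ => -(Real.log a + 1)/a) Filter.atTop (nhds 0) := by
  have h1 := Real.tendsto_pow_log_div_mul_add_atTop 1 0 1 one_ne_zero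
  simp only [pow_one, one_mul, add_zero] at h1
  have h2 : Filter.Tendsto (fun a : ℝ => -(Real.log a / a) - a⁻¹) Filter.atTop
      (nhds (-0 - 0)) := (h1.neg).sub tendsto_inv_atTop_zero
  rw [show (-0 - 0 : ℝ) = 0 by norm_num] at h2
  refine h2.congr' ?_
  filter_upwards [Filter.eventually_gt_atTop (0:ℝ)] with a ha
  field_simp
  ring

lemma log_tail_integrable : IntegrableOn (fun x => Real.log x / x^2) (Ioi (1:ℝ)) :=
  integrableOn_Ioi_deriv_of_nonneg' (fun x hx => hasDeriv_neglog hx)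
    (fun x hx => by
      have : 0 < x := lt_trans one_pos hx
      have : 0 ≤ Real.log x := Real.log_nonneg (le_of_lt hx)
      positivity)
    tendsto_neglog

lemma log_tail_integral : ∫ x in Ioi (1:ℝ), Real.log x / x^2 = 1 := by
  rw [integral_Ioi_of_hasDerivAt_of_nonneg' (fun x hx => hasDeriv_neglog hx)
    (fun x hx => by
      have : 0 < x := lt_trans one_pos hx
      have : 0 ≤ Real.log x := Real.log_nonneg (le_of_lt hx)
      positivity)
    tendsto_neglog]
  simp [Real.log_one]

lemma tail_integrable' {c r : ℝ} (hr : 0 < r) :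
    IntegrableOn (fun t : ℝ => (c*t^2)⁻¹) (Ioi r) := by
  have key : ∀ t ∈ Ioi r, c⁻¹ * t ^ (-2:ℝ) = (c*t^2)⁻¹ := by
    intro t ht
    have ht0 : 0 < t := hr.trans ht
    rw [Real.rpow_neg ht0.le, show ((2:ℝ)) = ((2:ℕ):ℝ) by norm_num, Real.rpow_natCast,
      mul_inv]
  exact IntegrableOn.congr_fun
      ((integrableOn_Ioi_rpow_of_lt (by norm_num : (-2:ℝ) < -1) hr).const_mul c⁻¹)
      key measurableSet_Ioi

lemma tail_integral' {c r : ℝ} (hr : 0 < r) :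
    ∫ t in Ioi r, (c*t^2)⁻¹ = c⁻¹ * r⁻¹ := by
  have key : ∀ t ∈ Ioi r, c⁻¹ * t ^ (-2:ℝ) = (c*t^2)⁻¹ := by
    intro t ht
    have ht0 : 0 < t := hr.trans ht
    rw [Real.rpow_neg ht0.le, show ((2:ℝ)) = ((2:ℕ):ℝ) by norm_num, Real.rpow_natCast,
      mul_inv]
  rw [← setIntegral_congr_fun measurableSet_Ioi key, integral_const_mul,
    integral_Ioi_rpow_of_lt (by norm_num) hr]
  norm_num [Real.rpow_neg_one]

lemma outer_large :
    ∫⁻ a in Ioi (1:ℝ), ENNReal.ofReal (2 * K a) = ENNReal.ofReal 10 := by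
  have hpt : ∀ a ∈ Ioi (1:ℝ), ENNReal.ofReal (2 * K a)
      = ENNReal.ofReal ((4⁻¹*a^2)⁻¹ + 6 * (Real.log a / a^2)) := by
    intro a ha
    have ha1 : 1 < a := ha
    have ha0 : 0 < a := lt_trans one_pos ha1
    rw [K, if_neg (not_le.mpr ha1)]
    congr 1
    field_simp
    ring
  rw [setLIntegral_congr_fun measurableSet_Ioi hpt]
  have hint : IntegrableOn (fun a : ℝ => (4⁻¹*a^2)⁻¹ + 6 * (Real.log a / a^2)) (Ioi 1) :=
    (tail_integrable' one_pos).add (log_tail_integrable.const_mul 6)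
  rw [← ofReal_integral_eq_lintegral_ofReal hint ?_]
  · congr 1
    rw [integral_add (tail_integrable' one_pos) (log_tail_integrable.const_mul 6),
      integral_const_mul, tail_integral' one_pos, log_tail_integral]
    norm_num
  · refine (ae_restrict_iff' measurableSet_Ioi).mpr (ae_of_all _ fun a ha => ?_)
    have ha0 : 0 < a := lt_trans one_pos ha
    have hl : 0 ≤ Real.log a := Real.log_nonneg (le_of_lt ha)
    positivity

lemma outer_small :
    ∫⁻ a in Ioc (0:ℝ) 1, ENNReal.ofReal (2 * K a) = ENNReal.ofReal 8 := by
  have hpt : ∀ a ∈ Ioc (0:ℝ) 1, ENNReal.ofReal (2 * K a)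
      = ENNReal.ofReal (4 * a ^ (-(1/2) : ℝ)) := by
    intro a ha
    rw [K, if_pos ha.2]
    congr 1
    rw [Real.rpow_neg ha.1.le, Real.sqrt_eq_rpow]
    field_simp
    ring
  rw [setLIntegral_congr_fun measurableSet_Ioc hpt]
  have hint : IntegrableOn (fun a : ℝ => 4 * a ^ (-(1/2) : ℝ)) (Ioc 0 1) := by
    have := (intervalIntegral.intervalIntegrable_rpow' (a := 0) (b := 1) (by norm_num : (-1:ℝ) < -(1/2)))
    rw [intervalIntegrable_iff_integrableOn_Ioc_of_le zero_le_one] at this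
    exact this.const_mul 4
  rw [← ofReal_integral_eq_lintegral_ofReal hint ?_]
  · congr 1
    rw [← intervalIntegral.integral_of_le zero_le_one, intervalIntegral.integral_const_mul,
      integral_rpow (Or.inl (by norm_num : (-1:ℝ) < -(1/2)))]
    rw [Real.zero_rpow (by norm_num)]
    norm_num
  · refine (ae_restrict_iff' measurableSet_Ioc).mpr (ae_of_all _ fun a ha => ?_)
    have ha0 : 0 < a := ha.1
    positivity

lemma outer_total :
    ∫⁻ a in Ioi (0:ℝ), ENNReal.ofReal (2 * K a) = ENNReal.ofReal 18 := by
  rw [show Ioi (0:ℝ) = Ioc 0 1 ∪ Ioi 1 from (Ioc_union_Ioi_eq_Ioi zero_le_one).symm,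
    lintegral_union measurableSet_Ioi (Ioc_disjoint_Ioi le_rfl),
    outer_small, outer_large, ← ENNReal.ofReal_add (by norm_num) (by norm_num)]
  norm_num

lemma G_measurable (c : ℝ) : Measurable (fun t => ENNReal.ofReal (G c t)) := by
  apply Measurable.ennreal_ofReal
  unfold G
  exact ((measurable_const.max (measurable_id.max
    ((measurable_id.const_mul c).inv))).mul (measurable_id.const_mul c)).inv

lemma innerK {c : ℝ} (hc : 0 ≤ c) :
    ∫⁻ t in Ioi (0:ℝ), ENNReal.ofReal (G c t) = ENNReal.ofReal (K c) := by
  rcases hc.lt_or_eq with hpos | h0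
  · by_cases h1 : c ≤ 1
    · rw [inner_small hpos h1, K, if_pos h1]
    · rw [inner_large (le_of_lt (not_le.mp h1)), K, if_neg h1]
  · rw [← h0]
    simp [G, K]


/-- real archimedian density: the integral over `(ℝ∖{0})²` of
`1/(max{1,|y₁|,|y₂|,|y₁y₂|⁻¹}·|y₁y₂|)` with respect to Lebesgue measure equals `36`. -/
theorem stmt11 :
    (∫ y in {y : ℝ × ℝ | y.1 ≠ 0 ∧ y.2 ≠ 0},
      (max (max 1 |y.1|) (max |y.2| |y.1 * y.2|⁻¹) * |y.1 * y.2|)⁻¹)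
    = 36 := by
  have hf_meas : Measurable (fun y : ℝ × ℝ =>
      (max (max 1 |y.1|) (max |y.2| |y.1 * y.2|⁻¹) * |y.1 * y.2|)⁻¹) := by
    apply Measurable.inv
    apply Measurable.mul
    · exact (measurable_const.max measurable_fst.abs).max
        ((measurable_snd.abs).max ((measurable_fst.mul measurable_snd).abs.inv))
    · exact (measurable_fst.mul measurable_snd).abs
  have hA : (volume : Measure (ℝ×ℝ)).restrict {y : ℝ × ℝ | y.1 ≠ 0 ∧ y.2 ≠ 0} = volume := by
    apply Measure.restrict_eq_self_of_ae_mem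
    rw [ae_iff]
    have hsub : {y : ℝ×ℝ | ¬(y.1 ≠ 0 ∧ y.2 ≠ 0)}
        ⊆ (({(0:ℝ)} ×ˢ (univ : Set ℝ)) ∪ ((univ : Set ℝ) ×ˢ {(0:ℝ)})) := by
      intro y hy
      simp only [mem_setOf_eq, not_and_or, not_not] at hy
      rcases hy with h | h
      · exact Or.inl ⟨h, mem_univ _⟩
      · exact Or.inr ⟨mem_univ _, h⟩
    refine measure_mono_null hsub (measure_union_null ?_ ?_)
    · rw [Measure.volume_eq_prod, Measure.prod_prod]
      simp
    · rw [Measure.volume_eq_prod, Measure.prod_prod]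
      simp
  rw [hA]
  rw [integral_eq_lintegral_of_nonneg_ae (ae_of_all _ fun y => by positivity)
    hf_meas.aestronglyMeasurable]
  have key : ∫⁻ y : ℝ×ℝ, ENNReal.ofReal
      ((max (max 1 |y.1|) (max |y.2| |y.1 * y.2|⁻¹) * |y.1 * y.2|)⁻¹)
      = ENNReal.ofReal 36 := by
    rw [Measure.volume_eq_prod, lintegral_prod _ hf_meas.ennreal_ofReal.aemeasurable]
    have inner : ∀ a : ℝ, (∫⁻ b, ENNReal.ofReal
        ((max (max 1 |a|) (max |b| |a * b|⁻¹) * |a * b|)⁻¹))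
        = ENNReal.ofReal (2 * K |a|) := by
      intro a
      have hfg : ∀ b : ℝ, (max (max 1 |a|) (max |b| |a * b|⁻¹) * |a * b|)⁻¹ = G |a| |b| := by
        intro b
        simp only [G, abs_mul]
      simp_rw [hfg]
      rw [lintegral_comp_abs' (G_measurable |a|), innerK (abs_nonneg a),
        ENNReal.ofReal_mul (by norm_num : (0:ℝ) ≤ 2), ENNReal.ofReal_ofNat]
    simp_rw [inner]
    rw [lintegral_comp_abs' (F := fun a => ENNReal.ofReal (2 * K a)) (Measurable.ennreal_ofReal (measurable_const.mul K_measurable)),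
      outer_total]
    rw [show ENNReal.ofReal 36 = 2 * ENNReal.ofReal 18 by
      rw [← ENNReal.ofReal_ofNat 2, ← ENNReal.ofReal_mul (by norm_num)]; norm_num]
  rw [key, ENNReal.toReal_ofReal (by norm_num)]
end

section
/- For u ∈ O_K ∖ {0} let d(u) denote the number of divisors of u up to units (equivalently the number of ideals of O_K containing the ideal (u)). Then for all U ≥ 2, Σ_{u ∈ O_K ∖ {0}, ‖u‖_∞ ≤ U} d(u) · ‖u‖_∞^{−5/6} = O(U^{1/6} log U), with an implied constant depending only on K. -/
open NumberField

open Finset Module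




lemma helperA (p : ℝ) (hp : 0 < p) {x : ℝ} (hx : 1 ≤ x) :
    x ^ (-p) - (x + 1) ^ (-p) ≤ p * x ^ (-p - 1) := by
  have hx0 : (0:ℝ) < x := lt_of_lt_of_le one_pos hx
  obtain ⟨c, hc, hslope⟩ := exists_hasDerivAt_eq_slope (fun t => t ^ (-p))
      (fun t => (-p) * t ^ (-p - 1)) (by linarith : x < x + 1)
      (by
        apply ContinuousOn.rpow_const continuousOn_id
        intro t ht
        exact Or.inl (ne_of_gt (lt_of_lt_of_le hx0 ht.1)))
      (by
        intro t ht
        exact Real.hasDerivAt_rpow_const (Or.inl (ne_of_gt (lt_of_lt_of_le hx0 ht.1.le))))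
  have hc0 : 0 < c := lt_trans hx0 hc.1
  have h1 : (x:ℝ) + 1 - x = 1 := by ring
  rw [h1, div_one] at hslope
  have h2 : x ^ (-p) - (x+1) ^ (-p) = p * c ^ (-p - 1) := by linarith
  rw [h2]
  have : c ^ (-p - 1) ≤ x ^ (-p - 1) :=
    Real.rpow_le_rpow_of_nonpos hx0 hc.1.le (by linarith)
  nlinarith

lemma helperB {x : ℝ} (hx : 1 ≤ x) :
    (1/6 : ℝ) * x ^ (-(5:ℝ)/6) ≤ x ^ ((1:ℝ)/6) - (x - 1) ^ ((1:ℝ)/6) := by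
  have hx0 : (0:ℝ) < x := lt_of_lt_of_le one_pos hx
  obtain ⟨c, hc, hslope⟩ := exists_hasDerivAt_eq_slope (fun t => t ^ ((1:ℝ)/6))
      (fun t => (1/6 : ℝ) * t ^ ((1:ℝ)/6 - 1)) (by linarith : x - 1 < x)
      (by
        apply ContinuousOn.rpow_const continuousOn_id
        intro t ht
        exact Or.inr (by norm_num))
      (by
        intro t ht
        have ht0 : 0 < t := by
          rcases ht with ⟨h1, h2⟩
          linarith [hx, h1]
        exact Real.hasDerivAt_rpow_const (Or.inl (ne_of_gt ht0)))
  have hc0 : 0 < c := by rcases hc with ⟨h1, h2⟩; linarith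
  have h1 : (x:ℝ) - (x - 1) = 1 := by ring
  rw [h1, div_one] at hslope
  have h2 : x ^ ((1:ℝ)/6) - (x-1) ^ ((1:ℝ)/6) = (1/6 : ℝ) * c ^ ((1:ℝ)/6 - 1) := by linarith
  rw [h2]
  have : x ^ ((1:ℝ)/6 - 1) ≤ c ^ ((1:ℝ)/6 - 1) :=
    Real.rpow_le_rpow_of_nonpos hc0 hc.2.le (by norm_num)
  have he : ((1:ℝ)/6 - 1) = -(5:ℝ)/6 := by norm_num
  rw [he] at this
  nlinarith

lemma helperC {m : ℕ} (hm : 2 ≤ m) : ((m:ℝ))⁻¹ ≤ Real.log m - Real.log (m - 1) := by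
  have hm1 : (1:ℝ) ≤ (m:ℝ) - 1 := by
    have : (2:ℝ) ≤ (m:ℝ) := by exact_mod_cast hm
    linarith
  have hm0 : (0:ℝ) < (m:ℝ) := by linarith
  have h := Real.log_le_sub_one_of_pos (x := ((m:ℝ) - 1) / m) (by positivity)
  rw [Real.log_div (by linarith) (ne_of_gt hm0)] at h
  have : ((m:ℝ) - 1) / m - 1 = -(m:ℝ)⁻¹ := by field_simp; ring
  rw [this] at h
  linarith

-- telescoping sum bounds
lemma sumTS (M : ℕ) : ∑ m ∈ Ico 1 (M+1), ((m:ℕ):ℝ) ^ (-(5:ℝ)/6) ≤ 6 * (M:ℝ) ^ ((1:ℝ)/6) := by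
  have h1 : ∀ m ∈ Ico 1 (M+1), ((m:ℕ):ℝ) ^ (-(5:ℝ)/6)
      ≤ 6 * (((m:ℕ):ℝ) ^ ((1:ℝ)/6) - (((m-1:ℕ)):ℝ) ^ ((1:ℝ)/6)) := by
    intro m hm
    rw [mem_Ico] at hm
    have hm1 : 1 ≤ m := hm.1
    have hmr : (1:ℝ) ≤ (m:ℝ) := by exact_mod_cast hm1
    have hcast : ((m - 1 : ℕ) : ℝ) = (m:ℝ) - 1 := by
      have := Nat.cast_sub hm1 (R := ℝ)
      simpa using this
    rw [hcast]
    have := helperB hmr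
    linarith
  calc ∑ m ∈ Ico 1 (M+1), ((m:ℕ):ℝ) ^ (-(5:ℝ)/6)
      ≤ ∑ m ∈ Ico 1 (M+1), 6 * (((m:ℕ):ℝ) ^ ((1:ℝ)/6) - (((m-1:ℕ)):ℝ) ^ ((1:ℝ)/6)) :=
        Finset.sum_le_sum h1
    _ = 6 * ∑ m ∈ Ico 1 (M+1), ((((m:ℕ)):ℝ) ^ ((1:ℝ)/6) - (((m-1:ℕ)):ℝ) ^ ((1:ℝ)/6)) := by
        rw [Finset.mul_sum]
    _ ≤ 6 * (M:ℝ) ^ ((1:ℝ)/6) := by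
        have : ∑ m ∈ Ico 1 (M+1), ((((m:ℕ)):ℝ) ^ ((1:ℝ)/6) - (((m-1:ℕ)):ℝ) ^ ((1:ℝ)/6))
            = (M:ℝ) ^ ((1:ℝ)/6) - ((0:ℕ):ℝ) ^ ((1:ℝ)/6) := by
          rw [Finset.sum_Ico_eq_sum_range]
          simp only [Nat.add_sub_cancel]
          have hts := Finset.sum_range_sub (f := fun i : ℕ => ((i:ℕ):ℝ) ^ ((1:ℝ)/6)) M
          rw [← hts]
          apply Finset.sum_congr rfl
          intro i _
          have h : (1 : ℕ) + i = i + 1 := by omega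
          rw [h]
          simp
        rw [this]
        rw [Nat.cast_zero, Real.zero_rpow (by norm_num : (1:ℝ)/6 ≠ 0)]
        have : (0:ℝ) ≤ (M:ℝ) ^ ((1:ℝ)/6) := Real.rpow_nonneg (Nat.cast_nonneg M) _
        linarith

lemma sumH (M : ℕ) : ∑ m ∈ Ico 1 (M+1), ((m:ℕ):ℝ)⁻¹ ≤ 1 + Real.log M := by
  rcases Nat.eq_zero_or_pos M with hM | hM
  · subst hM; simp
  · have hins : Finset.Ico 1 (M+1) = insert 1 (Finset.Ico 2 (M+1)) := by
      exact (Finset.insert_Ico_add_one_left_eq_Ico (by omega)).symm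
    rw [hins, Finset.sum_insert (by simp)]
    have h2 : ∑ m ∈ Ico 2 (M+1), ((m:ℕ):ℝ)⁻¹ ≤ Real.log M := by
      have hle : ∀ m ∈ Ico 2 (M+1), ((m:ℕ):ℝ)⁻¹
          ≤ Real.log m - Real.log ((m-1:ℕ)) := by
        intro m hm
        rw [mem_Ico] at hm
        have hcast : ((m - 1 : ℕ) : ℝ) = (m:ℝ) - 1 := by
          have := Nat.cast_sub (by omega : 1 ≤ m) (R := ℝ)
          simpa using this
        rw [hcast]
        exact helperC hm.1
      calc ∑ m ∈ Ico 2 (M+1), ((m:ℕ):ℝ)⁻¹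
          ≤ ∑ m ∈ Ico 2 (M+1), (Real.log m - Real.log ((m-1:ℕ))) := Finset.sum_le_sum hle
        _ = Real.log M := by
            rw [Finset.sum_Ico_eq_sum_range]
            have h21 : M + 1 - 2 = M - 1 := by omega
            rw [h21]
            have hts := Finset.sum_range_sub (f := fun i : ℕ => Real.log ((i+1:ℕ))) (M-1)
            have hM1 : M - 1 + 1 = M := by omega
            rw [hM1, show (0+1 : ℕ) = 1 from rfl, Nat.cast_one, Real.log_one, sub_zero] at hts
            rw [← hts]
            apply Finset.sum_congr rfl
            intro i _
            have h : (2 : ℕ) + i = (i+1) + 1 := by omega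
            have h' : (2 : ℕ) + i - 1 = i + 1 := by omega
            rw [h', h]
    linarith

lemma telesc (f : ℕ → ℝ) (n M : ℕ) (h : n ≤ M) :
    ∑ m ∈ Ico n M, (f m - f (m+1)) = f n - f M := by
  rw [Finset.sum_Ico_eq_sub _ h, Finset.sum_range_sub' f, Finset.sum_range_sub' f]
  ring

lemma abel {α : Type*} (F : Finset α) (w : α → ℝ)
    (M : ℕ) (hM1 : 1 ≤ M) (hw1 : ∀ u ∈ F, 1 ≤ ⌊w u⌋₊) (hwM : ∀ u ∈ F, ⌊w u⌋₊ ≤ M)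
    (f : ℕ → ℝ) (hf0 : ∀ n, 0 ≤ f n) (hmono : ∀ m : ℕ, 1 ≤ m → f (m+1) ≤ f m)
    (C₀ : ℝ)
    (hcnt : ∀ m : ℕ, 1 ≤ m →
      (((F.filter (fun u => ⌊w u⌋₊ ≤ m)).card : ℝ)) ≤ C₀ * (m+1)) :
    ∑ u ∈ F, f ⌊w u⌋₊ ≤
      (∑ m ∈ Ico 1 M, C₀ * (m+1) * (f m - f (m+1))) + C₀ * (M+1) * f M := by
  classical
  have hΔ : ∀ m : ℕ, 1 ≤ m → 0 ≤ f m - f (m+1) := fun m hm => by linarith [hmono m hm]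
  have step1 : ∑ u ∈ F, f ⌊w u⌋₊
      = (∑ u ∈ F, ∑ m ∈ Ico (⌊w u⌋₊) M, (f m - f (m+1))) + (F.card : ℝ) * f M := by
    have : ∀ u ∈ F, f ⌊w u⌋₊ = (∑ m ∈ Ico (⌊w u⌋₊) M, (f m - f (m+1))) + f M := by
      intro u hu
      rw [telesc f _ M (hwM u hu)]
      ring
    rw [Finset.sum_congr rfl this, Finset.sum_add_distrib, Finset.sum_const,
      nsmul_eq_mul]
  have step2 : ∑ u ∈ F, ∑ m ∈ Ico (⌊w u⌋₊) M, (f m - f (m+1))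
      = ∑ m ∈ Ico 1 M, ((F.filter (fun u => ⌊w u⌋₊ ≤ m)).card : ℝ) * (f m - f (m+1)) := by
    have h1 : ∀ u ∈ F, ∑ m ∈ Ico (⌊w u⌋₊) M, (f m - f (m+1))
        = ∑ m ∈ Ico 1 M, if ⌊w u⌋₊ ≤ m then (f m - f (m+1)) else 0 := by
      intro u hu
      rw [← Finset.sum_filter]
      congr 1
      ext m
      simp only [mem_Ico, mem_filter]
      have := hw1 u hu
      omega
    rw [Finset.sum_congr rfl h1, Finset.sum_comm]
    apply Finset.sum_congr rfl
    intro m _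
    rw [← Finset.sum_filter, Finset.sum_const, nsmul_eq_mul]
  rw [step1, step2]
  have hbd1 : ∑ m ∈ Ico 1 M, ((F.filter (fun u => ⌊w u⌋₊ ≤ m)).card : ℝ) * (f m - f (m+1))
      ≤ ∑ m ∈ Ico 1 M, C₀ * (m+1) * (f m - f (m+1)) := by
    apply Finset.sum_le_sum
    intro m hm
    rw [mem_Ico] at hm
    exact mul_le_mul_of_nonneg_right (hcnt m hm.1) (hΔ m hm.1)
  have hbd2 : (F.card : ℝ) * f M ≤ C₀ * (M+1) * f M := by
    apply mul_le_mul_of_nonneg_right _ (hf0 M)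
    have : F = F.filter (fun u => ⌊w u⌋₊ ≤ M) := by
      rw [Finset.filter_true_of_mem hwM]
    rw [this]
    exact hcnt M hM1
  linarith

lemma norm_eq_sq (K : Type) [Field K] [NumberField K]
    (hdeg : Module.finrank ℚ K = 2)
    (ι : K →+* ℂ) (himag : ∃ x : K, (ι x).im ≠ 0) (x : K) :
    ((Algebra.norm ℚ x : ℚ) : ℂ) = (‖ι x‖ ^ 2 : ℝ) := by
  classical
  have h := Algebra.norm_eq_prod_embeddings ℚ ℂ x
  set σ₁ : K →ₐ[ℚ] ℂ := ι.toRatAlgHom with hσ₁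
  set σ₂ : K →ₐ[ℚ] ℂ := ((starRingEnd ℂ).comp ι).toRatAlgHom with hσ₂
  have hne : σ₁ ≠ σ₂ := by
    obtain ⟨x₀, hx₀⟩ := himag
    intro hcontr
    apply hx₀
    have := congrArg (fun σ => (σ x₀ : ℂ)) hcontr
    simp only [hσ₁, hσ₂] at this
    have h2 : ι x₀ = (starRingEnd ℂ) (ι x₀) := this
    rw [eq_comm, Complex.conj_eq_iff_im] at h2
    exact h2
  have hcard : Fintype.card (K →ₐ[ℚ] ℂ) = 2 := by
    rw [AlgHom.card]; exact hdeg
  have huniv : (Finset.univ : Finset (K →ₐ[ℚ] ℂ)) = {σ₁, σ₂} := by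
    symm
    apply Finset.eq_univ_of_card
    rw [Finset.card_insert_of_notMem (by simpa using hne), Finset.card_singleton, hcard]
  rw [huniv, Finset.prod_insert (by simpa using hne), Finset.prod_singleton] at h
  have hprod : σ₁ x * σ₂ x = (‖ι x‖ ^ 2 : ℝ) := by
    have : σ₁ x = ι x := rfl
    have h2 : σ₂ x = (starRingEnd ℂ) (ι x) := rfl
    rw [this, h2, Complex.mul_conj]
    rw [← Complex.sq_norm]
  rw [← hprod, ← h]
  rfl

lemma one_le_sq (K : Type) [Field K] [NumberField K]
    (hdeg : Module.finrank ℚ K = 2)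
    (ι : K →+* ℂ) (himag : ∃ x : K, (ι x).im ≠ 0) (u : 𝓞 K) (hu : u ≠ 0) :
    1 ≤ ‖ι (u : K)‖ ^ 2 := by
  have h := norm_eq_sq K hdeg ι himag (u : K)
  have hint : (Algebra.norm ℤ u : ℚ) = Algebra.norm ℚ (u : K) := Algebra.coe_norm_int u
  have hnz : Algebra.norm ℤ u ≠ 0 := by
    intro hcontr
    have : Algebra.norm ℚ (u : K) = 0 := by rw [← hint, hcontr]; norm_num
    rw [Algebra.norm_eq_zero_iff] at this
    exact hu (by exact_mod_cast this)
  -- the norm as a real number equals abs^2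
  have hre : ((Algebra.norm ℤ u : ℤ) : ℝ) = ‖ι (u : K)‖ ^ 2 := by
    have : (((Algebra.norm ℤ u : ℤ) : ℚ) : ℂ) = ((‖ι (u : K)‖ ^ 2 : ℝ) : ℂ) := by
      rw [hint]; exact h
    have h2 : (((Algebra.norm ℤ u : ℤ) : ℝ) : ℂ) = ((‖ι (u : K)‖ ^ 2 : ℝ) : ℂ) := by
      rw [← this]; norm_cast
    exact_mod_cast h2
  have hpos : (0:ℝ) < ((Algebra.norm ℤ u : ℤ) : ℝ) := by
    rw [hre]
    have : ι (u : K) ≠ 0 := by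
      intro hc
      apply hu
      have : (u : K) = 0 := by
        apply ι.injective
        simpa using hc
      exact_mod_cast this
    have habs : 0 < ‖ι (u:K)‖ := norm_pos_iff.mpr this
    positivity
  have h1 : (1:ℤ) ≤ Algebra.norm ℤ u := by
    have : (0:ℤ) < Algebra.norm ℤ u := by exact_mod_cast hpos
    omega
  calc (1:ℝ) ≤ ((Algebra.norm ℤ u : ℤ) : ℝ) := by exact_mod_cast h1
    _ = _ := hre

noncomputable abbrev omg (K : Type) [Field K] [NumberField K] (ι : K →+* ℂ)
    (i : Module.Free.ChooseBasisIndex ℤ (𝓞 K)) : ℂ :=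
  ι (algebraMap (𝓞 K) K (RingOfIntegers.basis K i))

lemma span_top (K : Type) [Field K] [NumberField K]
    (ι : K →+* ℂ) (himag : ∃ x : K, (ι x).im ≠ 0) :
    ⊤ ≤ Submodule.span ℝ (Set.range (omg K ι)) := by
  classical
  have hK : ∀ x : K, ι x ∈ Submodule.span ℝ (Set.range (omg K ι)) := by
    intro x
    have hx := Basis.sum_repr (integralBasis K) x
    have key : ι x = ∑ i, (((integralBasis K).repr x i : ℚ) : ℝ) • omg K ι i := by
      conv_lhs => rw [← hx]
      rw [map_sum]
      apply Finset.sum_congr rfl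
      intro i _
      rw [Algebra.smul_def, map_mul, integralBasis_apply]
      rw [show ι (algebraMap ℚ K ((integralBasis K).repr x i)) =
          (((integralBasis K).repr x i : ℚ) : ℂ) by
        rw [eq_ratCast (algebraMap ℚ K) _, map_ratCast]]
      rw [show ((((integralBasis K).repr x i : ℚ)) : ℂ) =
        ((((integralBasis K).repr x i : ℚ) : ℝ) : ℂ) by norm_cast]
      rw [← Complex.real_smul]
    rw [key]
    apply Submodule.sum_smul_mem
    intro i _
    exact Submodule.subset_span ⟨i, rfl⟩
  obtain ⟨x₀, hx₀⟩ := himag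
  intro z _
  have h1 : (1 : ℂ) ∈ Submodule.span ℝ (Set.range (omg K ι)) := by
    have := hK 1; rwa [map_one] at this
  have h2 : ι x₀ ∈ Submodule.span ℝ (Set.range (omg K ι)) := hK x₀
  have hz : z = (z.re - z.im * (ι x₀).re / (ι x₀).im) • (1:ℂ)
      + (z.im / (ι x₀).im) • (ι x₀) := by
    apply Complex.ext <;> simp [Complex.add_re, Complex.add_im] <;> field_simp <;> ring
  rw [hz]
  exact Submodule.add_mem _ (Submodule.smul_mem _ _ h1) (Submodule.smul_mem _ _ h2)

lemma count_main (K : Type) [Field K] [NumberField K]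
    (hdeg : Module.finrank ℚ K = 2)
    (ι : K →+* ℂ) (himag : ∃ x : K, (ι x).im ≠ 0) :
    ∃ C₀ : ℝ, 1 ≤ C₀ ∧ ∀ X : ℝ,
      ∃ F : Finset (𝓞 K),
        (∀ u : 𝓞 K, u ∈ F ↔ (u ≠ 0 ∧ ‖ι (u : K)‖ ^ 2 ≤ X)) ∧
        (1 ≤ X → (F.card : ℝ) ≤ C₀ * X) := by
  classical
  have hcardI : Fintype.card (Module.Free.ChooseBasisIndex ℤ (𝓞 K)) = 2 := by
    rw [← Module.finrank_eq_card_chooseBasisIndex, RingOfIntegers.rank, hdeg]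
  have hcard2 : Fintype.card (Module.Free.ChooseBasisIndex ℤ (𝓞 K))
      = Module.finrank ℝ ℂ := by rw [hcardI, Complex.finrank_real_complex]
  set BR : Basis (Module.Free.ChooseBasisIndex ℤ (𝓞 K)) ℝ ℂ :=
    basisOfTopLeSpanOfCardEqFinrank (omg K ι) (span_top K ι himag) hcard2 with hBR
  have hBRapp : ∀ i, BR i = omg K ι i := by
    intro i
    rw [hBR, coe_basisOfTopLeSpanOfCardEqFinrank]
  -- coordinate bound
  obtain ⟨c, hc1, hc⟩ : ∃ c : ℝ, 1 ≤ c ∧ ∀ i (z : ℂ), |BR.coord i z| ≤ c * ‖z‖ := by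
    refine ⟨1 + ∑ i, ‖LinearMap.toContinuousLinearMap (BR.coord i)‖, ?_, ?_⟩
    · have : (0:ℝ) ≤ ∑ i, ‖LinearMap.toContinuousLinearMap (BR.coord i)‖ :=
        Finset.sum_nonneg fun i _ => norm_nonneg _
      linarith
    · intro i z
      have h1 : |BR.coord i z| = ‖(LinearMap.toContinuousLinearMap (BR.coord i)) z‖ := by
        simp [Real.norm_eq_abs]
      rw [h1]
      have h2 := (LinearMap.toContinuousLinearMap (BR.coord i)).le_opNorm z
      have h3 : ‖LinearMap.toContinuousLinearMap (BR.coord i)‖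
          ≤ 1 + ∑ j, ‖LinearMap.toContinuousLinearMap (BR.coord j)‖ := by
        have := Finset.single_le_sum
          (f := fun j => ‖LinearMap.toContinuousLinearMap (BR.coord j)‖)
          (fun j _ => norm_nonneg _) (Finset.mem_univ i)
        linarith
      calc ‖(LinearMap.toContinuousLinearMap (BR.coord i)) z‖
          ≤ ‖LinearMap.toContinuousLinearMap (BR.coord i)‖ * ‖z‖ := h2
        _ ≤ (1 + ∑ j, ‖LinearMap.toContinuousLinearMap (BR.coord j)‖) * ‖z‖ := by
            exact mul_le_mul_of_nonneg_right h3 (norm_nonneg _)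
  -- coordinates of lattice points
  have hcoord : ∀ (u : 𝓞 K) (i : Module.Free.ChooseBasisIndex ℤ (𝓞 K)),
      (((RingOfIntegers.basis K).repr u i : ℤ) : ℝ) = BR.coord i (ι (algebraMap (𝓞 K) K u)) := by
    intro u i
    have hu := Basis.sum_repr (RingOfIntegers.basis K) u
    have key : ι (algebraMap (𝓞 K) K u)
        = ∑ j, (((RingOfIntegers.basis K).repr u j : ℤ) : ℝ) • BR j := by
      conv_lhs => rw [← hu]
      rw [map_sum, map_sum]
      apply Finset.sum_congr rfl
      intro j _
      rw [map_zsmul, map_zsmul, hBRapp]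
      rw [← Int.cast_smul_eq_zsmul ℝ]
    rw [key]
    simp only [map_sum, map_smul, Basis.coord_apply, Basis.repr_self]
    rw [Finset.sum_eq_single i]
    · simp
    · intro j _ hji
      simp [Finsupp.single_apply, hji]
    · intro h
      exact absurd (Finset.mem_univ i) h
  -- the counting argument
  refine ⟨(2*c+3)^2, by nlinarith, ?_⟩
  intro X
  set N : ℤ := ⌈c * Real.sqrt (max X 1)⌉ with hNdef
  have hsqrt1 : (1:ℝ) ≤ Real.sqrt (max X 1) := by
    have h := Real.sq_sqrt (show (0:ℝ) ≤ max X 1 by positivity)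
    nlinarith [Real.sqrt_nonneg (max X 1), le_max_right X 1]
  have hN0 : (0:ℤ) ≤ N := by
    have : (0:ℝ) ≤ c * Real.sqrt (max X 1) := by nlinarith
    exact_mod_cast Int.ceil_nonneg this
  set φ : 𝓞 K → (Module.Free.ChooseBasisIndex ℤ (𝓞 K) → ℤ) :=
    fun u i => (RingOfIntegers.basis K).repr u i with hφ
  have hinj : Function.Injective φ := by
    intro u v huv
    have : (RingOfIntegers.basis K).repr u = (RingOfIntegers.basis K).repr v := by
      ext i
      exact congrFun huv i
    exact (RingOfIntegers.basis K).repr.injective this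
  set T : Finset (Module.Free.ChooseBasisIndex ℤ (𝓞 K) → ℤ) :=
    Finset.Icc (fun _ => -N) (fun _ => N) with hT
  have hmaps : ∀ u : 𝓞 K, u ≠ 0 ∧ ‖ι (u : K)‖ ^ 2 ≤ X → φ u ∈ T := by
    intro u hu
    rw [hT, Finset.mem_Icc]
    have habs : ‖ι (u : K)‖ ≤ Real.sqrt (max X 1) := by
      rw [show ‖ι (u : K)‖ = Real.sqrt (‖ι (u : K)‖ ^ 2) by
        rw [Real.sqrt_sq (norm_nonneg _)]]
      exact Real.sqrt_le_sqrt (le_trans hu.2 (le_max_left X 1))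
    have hcc : ∀ i, |(((RingOfIntegers.basis K).repr u i : ℤ) : ℝ)| ≤ (N : ℝ) := by
      intro i
      rw [hcoord u i]
      calc |BR.coord i (ι (algebraMap (𝓞 K) K u))|
          ≤ c * ‖ι (algebraMap (𝓞 K) K u)‖ := hc i _
        _ ≤ c * Real.sqrt (max X 1) := by
            apply mul_le_mul_of_nonneg_left _ (by linarith)
            exact habs
        _ ≤ (N : ℝ) := Int.le_ceil _
    constructor
    · intro i
      have h1 := (abs_le.mp (hcc i)).1
      exact_mod_cast h1
    · intro i
      have h1 := (abs_le.mp (hcc i)).2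
      exact_mod_cast h1
  have hSfin : {u : 𝓞 K | u ≠ 0 ∧ ‖ι (u : K)‖ ^ 2 ≤ X}.Finite := by
    apply Set.Finite.subset (Set.Finite.preimage (Function.Injective.injOn hinj)
      (Finset.finite_toSet T))
    intro u hu
    exact hmaps u hu
  refine ⟨hSfin.toFinset, ?_, ?_⟩
  · intro u
    rw [Set.Finite.mem_toFinset]
    rfl
  · intro hX1
    have hmax : max X 1 = X := max_eq_left hX1
    have hcardle : hSfin.toFinset.card ≤ T.card := by
      apply Finset.card_le_card_of_injOn φ
      · intro u hu
        rw [Finset.mem_coe, Set.Finite.mem_toFinset] at hu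
        exact hmaps u hu
      · exact Function.Injective.injOn hinj
    have hTcard : (T.card : ℝ) = ((2*N+1).toNat : ℝ) ^ 2 := by
      have h2 : N + 1 - -N = 2*N+1 := by ring
      rw [hT, Pi.card_Icc, Finset.prod_const, Finset.card_univ, hcardI, Int.card_Icc, h2]
      push_cast
      ring
    have hNle : (N : ℝ) ≤ c * Real.sqrt X + 1 := by
      rw [← hmax]
      have := Int.ceil_lt_add_one (c * Real.sqrt (max X 1))
      linarith
    have hsq : Real.sqrt X ^ 2 = X := Real.sq_sqrt (by linarith)
    have hs1 : (1:ℝ) ≤ Real.sqrt X := by rw [hmax] at hsqrt1; exact hsqrt1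
    calc (hSfin.toFinset.card : ℝ) ≤ (T.card : ℝ) := by exact_mod_cast hcardle
      _ = ((2*N+1).toNat : ℝ) ^ 2 := hTcard
      _ = ((2*N+1 : ℤ) : ℝ) ^ 2 := by
          have h3 : (((2*N+1).toNat : ℕ) : ℝ) = ((2*N+1 : ℤ) : ℝ) := by
            rw [← Int.cast_natCast, Int.toNat_of_nonneg (by omega)]
          rw [h3]
      _ ≤ ((2*c+3) * Real.sqrt X) ^ 2 := by
          apply pow_le_pow_left₀ (by exact_mod_cast (show (0:ℤ) ≤ 2*N+1 by omega))
          push_cast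
          nlinarith
      _ = (2*c+3)^2 * X := by rw [mul_pow, hsq]
lemma dbound (K : Type) [Field K] [NumberField K] [DecidableEq (𝓞 K)]
    (hdeg : Module.finrank ℚ K = 2)
    (ι : K →+* ℂ) (himag : ∃ x : K, (ι x).im ≠ 0)
    (hcl : NumberField.classNumber K = 1)
    (X : ℝ) (F : Finset (𝓞 K))
    (hF : ∀ a : 𝓞 K, a ∈ F ↔ (a ≠ 0 ∧ ‖ι (a : K)‖ ^ 2 ≤ X))
    (u : 𝓞 K) (hu : u ∈ F) :
    Nat.card {I : Ideal (𝓞 K) // Ideal.span {u} ≤ I}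
      ≤ ((F ×ˢ F).filter (fun p : 𝓞 K × 𝓞 K => p.1 * p.2 = u)).card := by
  classical
  haveI hpir : IsPrincipalIdealRing (𝓞 K) := NumberField.classNumber_eq_one_iff.mp hcl
  rw [hF] at hu
  obtain ⟨hu0, huX⟩ := hu
  have habs0 : (0:ℝ) ≤ ‖ι (u:K)‖ ^ 2 := by positivity
  -- construct the injection
  have hgen : ∀ I : {I : Ideal (𝓞 K) // Ideal.span {u} ≤ I},
      Submodule.IsPrincipal.generator I.1 ∣ u := by
    intro I
    have hmem : u ∈ I.1 := I.2 (Ideal.subset_span rfl)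
    rw [← Submodule.IsPrincipal.span_singleton_generator I.1] at hmem
    exact (Ideal.mem_span_singleton).mp hmem
  set Φ : {I : Ideal (𝓞 K) // Ideal.span {u} ≤ I} → 𝓞 K × 𝓞 K :=
    fun I => (Submodule.IsPrincipal.generator I.1, (hgen I).choose) with hΦ
  have hΦprod : ∀ I, (Φ I).1 * (Φ I).2 = u := fun I => ((hgen I).choose_spec).symm
  have hΦmem : ∀ I, Φ I ∈ (F ×ˢ F).filter (fun p : 𝓞 K × 𝓞 K => p.1 * p.2 = u) := by
    intro I
    rw [Finset.mem_filter, Finset.mem_product]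
    have hprod := hΦprod I
    have h1 : (Φ I).1 ≠ 0 := by
      intro hc; apply hu0; rw [← hprod, hc, zero_mul]
    have h2 : (Φ I).2 ≠ 0 := by
      intro hc; apply hu0; rw [← hprod, hc, mul_zero]
    have hmulabs : ‖ι (u:K)‖ ^ 2
        = ‖ι ((Φ I).1 : K)‖ ^ 2 * ‖ι ((Φ I).2 : K)‖ ^ 2 := by
      rw [← hprod]
      push_cast
      rw [map_mul, norm_mul, mul_pow]
    have hge1 : (1:ℝ) ≤ ‖ι ((Φ I).2 : K)‖ ^ 2 := one_le_sq K hdeg ι himag _ h2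
    have hge1' : (1:ℝ) ≤ ‖ι ((Φ I).1 : K)‖ ^ 2 := one_le_sq K hdeg ι himag _ h1
    have hb1 : ‖ι ((Φ I).1 : K)‖ ^ 2 ≤ X := by nlinarith
    have hb2 : ‖ι ((Φ I).2 : K)‖ ^ 2 ≤ X := by nlinarith
    exact ⟨⟨(hF _).mpr ⟨h1, hb1⟩, (hF _).mpr ⟨h2, hb2⟩⟩, hprod⟩
  set Ψ : {I : Ideal (𝓞 K) // Ideal.span {u} ≤ I}
      → ↥((F ×ˢ F).filter (fun p : 𝓞 K × 𝓞 K => p.1 * p.2 = u)) := fun I => ⟨Φ I, hΦmem I⟩ with hΨ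
  have hΨinj : Function.Injective Ψ := by
    intro I J hIJ
    have h1 : (Φ I).1 = (Φ J).1 := by
      have := congrArg Subtype.val hIJ
      rw [Prod.ext_iff] at this
      exact this.1
    apply Subtype.ext
    rw [← Submodule.IsPrincipal.span_singleton_generator I.1,
      ← Submodule.IsPrincipal.span_singleton_generator J.1]
    rw [show Submodule.IsPrincipal.generator I.1 = (Φ I).1 from rfl,
      show Submodule.IsPrincipal.generator J.1 = (Φ J).1 from rfl, h1]
  calc Nat.card {I : Ideal (𝓞 K) // Ideal.span {u} ≤ I}
      ≤ Nat.card ↥((F ×ˢ F).filter (fun p : 𝓞 K × 𝓞 K => p.1 * p.2 = u)) :=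
        Nat.card_le_card_of_injective Ψ hΨinj
    _ = ((F ×ˢ F).filter (fun p : 𝓞 K × 𝓞 K => p.1 * p.2 = u)).card := Nat.card_eq_finsetCard _
lemma L1gen {α : Type*} (P : α → Prop) (nrm : α → ℝ) (C₀ : ℝ) (hC₀ : 1 ≤ C₀)
    (F : ℝ → Finset α)
    (hmem : ∀ X : ℝ, ∀ u : α, u ∈ F X ↔ (P u ∧ nrm u ≤ X))
    (hone : ∀ u, P u → 1 ≤ nrm u)
    (hcard : ∀ X : ℝ, 1 ≤ X → ((F X).card : ℝ) ≤ C₀ * X)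
    (X : ℝ) (hX : 1 ≤ X) :
    ∑ u ∈ F X, nrm u ^ (-(5:ℝ)/6) ≤ 12*C₀ * X ^ ((1:ℝ)/6) := by
  classical
  set M : ℕ := ⌊X⌋₊ with hMdef
  have hM1 : 1 ≤ M := Nat.le_floor (by exact_mod_cast hX)
  have hMX : (M : ℝ) ≤ X := Nat.floor_le (by linarith)
  have hXM : X < M + 1 := Nat.lt_floor_add_one X
  have hone' : ∀ u ∈ F X, 1 ≤ nrm u := by
    intro u hu; exact hone u ((hmem X u).mp hu).1
  have hw1 : ∀ u ∈ F X, 1 ≤ ⌊nrm u⌋₊ := by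
    intro u hu; exact Nat.le_floor (by exact_mod_cast hone' u hu)
  have hwM : ∀ u ∈ F X, ⌊nrm u⌋₊ ≤ M := by
    intro u hu; exact Nat.floor_le_floor ((hmem X u).mp hu).2
  set f : ℕ → ℝ := fun n => ((n:ℕ):ℝ) ^ (-(5:ℝ)/6) with hf
  have hf0 : ∀ n, 0 ≤ f n := fun n => Real.rpow_nonneg (Nat.cast_nonneg n) _
  have hmono : ∀ m : ℕ, 1 ≤ m → f (m+1) ≤ f m := by
    intro m hm
    apply Real.rpow_le_rpow_of_nonpos (by exact_mod_cast hm) (by push_cast; linarith)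
      (by norm_num)
  have hcnt : ∀ m : ℕ, 1 ≤ m →
      ((((F X).filter (fun u => ⌊nrm u⌋₊ ≤ m)).card : ℝ)) ≤ C₀ * (m+1) := by
    intro m hm
    have hsub : (F X).filter (fun u => ⌊nrm u⌋₊ ≤ m) ⊆ F (min X (m+1)) := by
      intro u hu
      rw [Finset.mem_filter] at hu
      obtain ⟨huF, hufl⟩ := hu
      rw [hmem]
      refine ⟨((hmem X u).mp huF).1, le_min ((hmem X u).mp huF).2 ?_⟩
      have h1 : nrm u < ⌊nrm u⌋₊ + 1 := Nat.lt_floor_add_one _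
      have h2 : (⌊nrm u⌋₊ : ℝ) ≤ m := by exact_mod_cast hufl
      push_cast
      linarith
    have h3 : ((F (min X (m+1))).card : ℝ) ≤ C₀ * min X (m+1) := by
      apply hcard
      apply le_min hX
      have : (1:ℝ) ≤ m := by exact_mod_cast hm
      push_cast
      linarith
    calc ((((F X).filter (fun u => ⌊nrm u⌋₊ ≤ m)).card : ℝ))
        ≤ ((F (min X (m+1))).card : ℝ) := by exact_mod_cast Finset.card_le_card hsub
      _ ≤ C₀ * min X (m+1) := h3
      _ ≤ C₀ * (m+1) := by
          apply mul_le_mul_of_nonneg_left (min_le_right _ _) (by linarith)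
  have habel := abel (F X) nrm M hM1 hw1 hwM f hf0 hmono C₀ hcnt
  -- compare the sum with the floor sum
  have hstep : ∑ u ∈ F X, nrm u ^ (-(5:ℝ)/6) ≤ ∑ u ∈ F X, f ⌊nrm u⌋₊ := by
    apply Finset.sum_le_sum
    intro u hu
    apply Real.rpow_le_rpow_of_nonpos
    · have := hw1 u hu
      have : (1:ℝ) ≤ (⌊nrm u⌋₊ : ℝ) := by exact_mod_cast this
      linarith
    · exact Nat.floor_le (by linarith [hone' u hu])
    · norm_num
  -- bound the Abel sum
  have hterm1 : ∑ m ∈ Ico 1 M, C₀ * (m+1) * (f m - f (m+1))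
      ≤ 10 * C₀ * X ^ ((1:ℝ)/6) := by
    have hpt : ∀ m ∈ Ico 1 M, C₀ * (m+1) * (f m - f (m+1))
        ≤ (5/3) * C₀ * ((m:ℕ):ℝ) ^ (-(5:ℝ)/6) := by
      intro m hm
      rw [mem_Ico] at hm
      have hm1 : (1:ℝ) ≤ (m:ℝ) := by exact_mod_cast hm.1
      have hm0 : (0:ℝ) < (m:ℝ) := by linarith
      have hΔ : f m - f (m+1) ≤ (5/6) * (m:ℝ) ^ (-(5:ℝ)/6 - 1) := by
        have h := helperA (5/6) (by norm_num) hm1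
        have e1 : (-(5/6:ℝ)) = (-(5:ℝ)/6) := by norm_num
        have e2 : (-(5/6:ℝ) - 1) = (-(5:ℝ)/6 - 1) := by norm_num
        rw [e2, e1] at h
        simp only [hf]
        push_cast
        exact h
      have hprod : (m:ℝ) * (m:ℝ) ^ (-(5:ℝ)/6 - 1) = (m:ℝ) ^ (-(5:ℝ)/6) := by
        have h := Real.rpow_add hm0 1 (-(5:ℝ)/6 - 1)
        rw [Real.rpow_one] at h
        rw [← h]
        norm_num
      have hΔ0 : 0 ≤ f m - f (m+1) := by
        have := hmono m hm.1; linarith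
      have hmm : ((m:ℝ)+1) ≤ 2*m := by linarith
      have h0 : (0:ℝ) ≤ (m:ℝ) ^ (-(5:ℝ)/6 - 1) := Real.rpow_nonneg (by linarith) _
      calc C₀ * (m+1) * (f m - f (m+1)) ≤ C₀ * (2*m) * ((5/6) * (m:ℝ) ^ (-(5:ℝ)/6 - 1)) := by
            apply mul_le_mul (by nlinarith) hΔ hΔ0 (by nlinarith)
        _ = (5/3) * C₀ * ((m:ℝ) * (m:ℝ) ^ (-(5:ℝ)/6 - 1)) := by ring
        _ = (5/3) * C₀ * ((m:ℕ):ℝ) ^ (-(5:ℝ)/6) := by rw [hprod]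
    calc ∑ m ∈ Ico 1 M, C₀ * (m+1) * (f m - f (m+1))
        ≤ ∑ m ∈ Ico 1 M, (5/3) * C₀ * ((m:ℕ):ℝ) ^ (-(5:ℝ)/6) := Finset.sum_le_sum hpt
      _ ≤ ∑ m ∈ Ico 1 (M+1), (5/3) * C₀ * ((m:ℕ):ℝ) ^ (-(5:ℝ)/6) := by
          apply Finset.sum_le_sum_of_subset_of_nonneg
          · apply Finset.Ico_subset_Ico le_rfl (by omega)
          · intro m _ _
            have := Real.rpow_nonneg (Nat.cast_nonneg m) (-(5:ℝ)/6)
            nlinarith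
      _ = (5/3) * C₀ * ∑ m ∈ Ico 1 (M+1), ((m:ℕ):ℝ) ^ (-(5:ℝ)/6) := by
          rw [Finset.mul_sum]
      _ ≤ (5/3) * C₀ * (6 * (M:ℝ) ^ ((1:ℝ)/6)) := by
          apply mul_le_mul_of_nonneg_left (sumTS M) (by linarith)
      _ ≤ 10 * C₀ * X ^ ((1:ℝ)/6) := by
          have h1 : (M:ℝ) ^ ((1:ℝ)/6) ≤ X ^ ((1:ℝ)/6) :=
            Real.rpow_le_rpow (Nat.cast_nonneg M) hMX (by norm_num)
          nlinarith [Real.rpow_nonneg (Nat.cast_nonneg M) ((1:ℝ)/6)]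
  have hterm2 : C₀ * (M+1) * f M ≤ 2 * C₀ * X ^ ((1:ℝ)/6) := by
    have hm1 : (1:ℝ) ≤ (M:ℝ) := by exact_mod_cast hM1
    have hm0 : (0:ℝ) < (M:ℝ) := by linarith
    have hfM : f M = (M:ℝ) ^ (-(5:ℝ)/6) := rfl
    have hprod : (M:ℝ) * (M:ℝ) ^ (-(5:ℝ)/6) = (M:ℝ) ^ ((1:ℝ)/6) := by
      have h := Real.rpow_add hm0 1 (-(5:ℝ)/6)
      rw [Real.rpow_one] at h
      rw [← h]
      norm_num
    have h1 : (M:ℝ) ^ ((1:ℝ)/6) ≤ X ^ ((1:ℝ)/6) :=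
      Real.rpow_le_rpow (Nat.cast_nonneg M) hMX (by norm_num)
    have h0 : (0:ℝ) ≤ (M:ℝ) ^ (-(5:ℝ)/6) := Real.rpow_nonneg (by linarith) _
    calc C₀ * (M+1) * f M ≤ C₀ * (2*M) * ((M:ℝ) ^ (-(5:ℝ)/6)) := by
          rw [hfM]
          apply mul_le_mul_of_nonneg_right _ h0
          nlinarith
      _ = 2 * C₀ * ((M:ℝ) * (M:ℝ) ^ (-(5:ℝ)/6)) := by ring
      _ = 2 * C₀ * (M:ℝ) ^ ((1:ℝ)/6) := by rw [hprod]
      _ ≤ 2 * C₀ * X ^ ((1:ℝ)/6) := by nlinarith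
  linarith

lemma L2gen {α : Type*} (P : α → Prop) (nrm : α → ℝ) (C₀ : ℝ) (hC₀ : 1 ≤ C₀)
    (F : ℝ → Finset α)
    (hmem : ∀ X : ℝ, ∀ u : α, u ∈ F X ↔ (P u ∧ nrm u ≤ X))
    (hone : ∀ u, P u → 1 ≤ nrm u)
    (hcard : ∀ X : ℝ, 1 ≤ X → ((F X).card : ℝ) ≤ C₀ * X)
    (U : ℝ) (hU : 2 ≤ U) :
    ∑ u ∈ F U, (nrm u)⁻¹ ≤ 6*C₀ * Real.log U := by
  classical
  have hX : (1:ℝ) ≤ U := by linarith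
  set M : ℕ := ⌊U⌋₊ with hMdef
  have hM1 : 1 ≤ M := Nat.le_floor (by exact_mod_cast hX)
  have hMX : (M : ℝ) ≤ U := Nat.floor_le (by linarith)
  have hone' : ∀ u ∈ F U, 1 ≤ nrm u := by
    intro u hu; exact hone u ((hmem U u).mp hu).1
  have hw1 : ∀ u ∈ F U, 1 ≤ ⌊nrm u⌋₊ := by
    intro u hu; exact Nat.le_floor (by exact_mod_cast hone' u hu)
  have hwM : ∀ u ∈ F U, ⌊nrm u⌋₊ ≤ M := by
    intro u hu; exact Nat.floor_le_floor ((hmem U u).mp hu).2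
  set f : ℕ → ℝ := fun n => ((n:ℕ):ℝ)⁻¹ with hf
  have hf0 : ∀ n, 0 ≤ f n := fun n => by positivity
  have hmono : ∀ m : ℕ, 1 ≤ m → f (m+1) ≤ f m := by
    intro m hm
    simp only [hf]
    apply inv_anti₀ (by exact_mod_cast hm) (by push_cast; linarith)
  have hcnt : ∀ m : ℕ, 1 ≤ m →
      ((((F U).filter (fun u => ⌊nrm u⌋₊ ≤ m)).card : ℝ)) ≤ C₀ * (m+1) := by
    intro m hm
    have hsub : (F U).filter (fun u => ⌊nrm u⌋₊ ≤ m) ⊆ F (min U (m+1)) := by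
      intro u hu
      rw [Finset.mem_filter] at hu
      obtain ⟨huF, hufl⟩ := hu
      rw [hmem]
      refine ⟨((hmem U u).mp huF).1, le_min ((hmem U u).mp huF).2 ?_⟩
      have h1 : nrm u < ⌊nrm u⌋₊ + 1 := Nat.lt_floor_add_one _
      have h2 : (⌊nrm u⌋₊ : ℝ) ≤ m := by exact_mod_cast hufl
      push_cast
      linarith
    have h3 : ((F (min U (m+1))).card : ℝ) ≤ C₀ * min U (m+1) := by
      apply hcard
      apply le_min hX
      have : (1:ℝ) ≤ m := by exact_mod_cast hm
      push_cast
      linarith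
    calc ((((F U).filter (fun u => ⌊nrm u⌋₊ ≤ m)).card : ℝ))
        ≤ ((F (min U (m+1))).card : ℝ) := by exact_mod_cast Finset.card_le_card hsub
      _ ≤ C₀ * min U (m+1) := h3
      _ ≤ C₀ * (m+1) := by
          apply mul_le_mul_of_nonneg_left (min_le_right _ _) (by linarith)
  have habel := abel (F U) nrm M hM1 hw1 hwM f hf0 hmono C₀ hcnt
  have hstep : ∑ u ∈ F U, (nrm u)⁻¹ ≤ ∑ u ∈ F U, f ⌊nrm u⌋₊ := by
    apply Finset.sum_le_sum
    intro u hu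
    simp only [hf]
    apply inv_anti₀
    · have := hw1 u hu
      have h' : (1:ℝ) ≤ (⌊nrm u⌋₊ : ℝ) := by exact_mod_cast this
      linarith
    · exact Nat.floor_le (by linarith [hone' u hu])
  have hterm1 : ∑ m ∈ Ico 1 M, C₀ * (m+1) * (f m - f (m+1))
      ≤ C₀ * (1 + Real.log U) := by
    have hpt : ∀ m ∈ Ico 1 M, C₀ * (m+1) * (f m - f (m+1)) = C₀ * ((m:ℕ):ℝ)⁻¹ := by
      intro m hm
      rw [mem_Ico] at hm
      have hm1 : (1:ℝ) ≤ (m:ℝ) := by exact_mod_cast hm.1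
      simp only [hf]
      push_cast
      field_simp
      ring
    rw [Finset.sum_congr rfl hpt, ← Finset.mul_sum]
    have hsum : ∑ m ∈ Ico 1 M, ((m:ℕ):ℝ)⁻¹ ≤ 1 + Real.log M := by
      calc ∑ m ∈ Ico 1 M, ((m:ℕ):ℝ)⁻¹ ≤ ∑ m ∈ Ico 1 (M+1), ((m:ℕ):ℝ)⁻¹ := by
            apply Finset.sum_le_sum_of_subset_of_nonneg
            · apply Finset.Ico_subset_Ico le_rfl (by omega)
            · intro m _ _; positivity
        _ ≤ 1 + Real.log M := sumH M
    have hlog : Real.log M ≤ Real.log U := by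
      apply Real.log_le_log (by exact_mod_cast hM1) hMX
    calc C₀ * ∑ m ∈ Ico 1 M, ((m:ℕ):ℝ)⁻¹ ≤ C₀ * (1 + Real.log M) := by
          apply mul_le_mul_of_nonneg_left hsum (by linarith)
      _ ≤ C₀ * (1 + Real.log U) := by
          apply mul_le_mul_of_nonneg_left (by linarith) (by linarith)
  have hterm2 : C₀ * (M+1) * f M ≤ 2 * C₀ := by
    have hm1 : (1:ℝ) ≤ (M:ℝ) := by exact_mod_cast hM1
    have hfM : f M = ((M:ℕ):ℝ)⁻¹ := rfl
    rw [hfM]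
    rw [show C₀ * ((M:ℝ)+1) * ((M:ℕ):ℝ)⁻¹ = C₀ * (((M:ℝ)+1) * ((M:ℝ))⁻¹) by push_cast; ring]
    have h2 : ((M:ℝ)+1) * ((M:ℝ))⁻¹ ≤ 2 := by
      rw [show (2:ℝ) = (2*(M:ℝ)) * ((M:ℝ))⁻¹ by field_simp]
      apply mul_le_mul_of_nonneg_right (by linarith) (by positivity)
    calc C₀ * (((M:ℝ)+1) * ((M:ℝ))⁻¹) ≤ C₀ * 2 :=
          mul_le_mul_of_nonneg_left h2 (by linarith)
      _ = 2 * C₀ := by ring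
  have hlog2 : (0.6931471803 : ℝ) < Real.log 2 := Real.log_two_gt_d9
  have hlogU : Real.log 2 ≤ Real.log U := Real.log_le_log (by norm_num) hU
  nlinarith [hstep, habel, hterm1, hterm2]

/-- divisor sum estimate: with `d(u)` the number of divisors of `u` up to
units (i.e. the number of ideals of `𝓞 K` containing `(u)`), for all `U ≥ 2` one has
`Σ_{u ≠ 0, ‖u‖ ≤ U} d(u)·‖u‖^{−5/6} = O(U^{1/6} log U)`. -/
theorem stmt13 (K : Type) [Field K] [NumberField K]
    (hdeg : Module.finrank ℚ K = 2)
    (ι : K →+* ℂ) (himag : ∃ x : K, (ι x).im ≠ 0)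
    (hcl : NumberField.classNumber K = 1)
    (nrm : 𝓞 K → ℝ) (hnrm : ∀ x : 𝓞 K, nrm x = ‖ι (x : K)‖ ^ 2)
    (d : 𝓞 K → ℕ)
    (hd : ∀ u : 𝓞 K, d u = Nat.card {I : Ideal (𝓞 K) // Ideal.span {u} ≤ I}) :
    ∃ C > (0 : ℝ), ∀ U : ℝ, U ≥ 2 →
      (∑' u : {u : 𝓞 K // u ≠ 0 ∧ nrm u ≤ U}, (d (u : 𝓞 K) : ℝ) * nrm (u : 𝓞 K) ^ (-(5 : ℝ) / 6))
        ≤ C * U ^ ((1 : ℝ) / 6) * Real.log U := by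
  classical
  obtain ⟨C₀, hC₀1, hCnt⟩ := count_main K hdeg ι himag
  choose F hFmem hFcard using hCnt
  have hmemN : ∀ X : ℝ, ∀ u : 𝓞 K, u ∈ F X ↔ (u ≠ 0 ∧ nrm u ≤ X) := by
    intro X u
    rw [hFmem X u, hnrm u]
  have honeN : ∀ u : 𝓞 K, u ≠ 0 → 1 ≤ nrm u := by
    intro u hu
    rw [hnrm]
    exact one_le_sq K hdeg ι himag u hu
  have hmulN : ∀ a b : 𝓞 K, nrm (a * b) = nrm a * nrm b := by
    intro a b
    rw [hnrm, hnrm, hnrm]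
    have h : ((a * b : 𝓞 K) : K) = (a : K) * (b : K) := by push_cast; ring
    rw [h, map_mul, norm_mul, mul_pow]
  have hnn : ∀ a : 𝓞 K, 0 ≤ nrm a := by
    intro a; rw [hnrm]; positivity
  set t : 𝓞 K → ℝ := fun a => nrm a ^ (-(5:ℝ)/6) with ht
  have ht0 : ∀ a : 𝓞 K, 0 ≤ t a := fun a => Real.rpow_nonneg (hnn a) _
  refine ⟨(12*C₀) * (6*C₀), by nlinarith, ?_⟩
  intro U hU
  have hU1 : (1:ℝ) ≤ U := by linarith
  haveI : Fintype {u : 𝓞 K // u ≠ 0 ∧ nrm u ≤ U} :=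
    Fintype.ofFinset (F U) (fun u => hmemN U u)
  rw [tsum_fintype]
  rw [← Finset.sum_subtype (F U) (fun u => hmemN U u)
    (fun u => (d u : ℝ) * nrm u ^ (-(5:ℝ)/6))]
  -- step 1: divisor bound
  have step1 : ∑ u ∈ F U, (d u : ℝ) * nrm u ^ (-(5:ℝ)/6)
      ≤ ∑ u ∈ F U, (((F U ×ˢ F U).filter (fun p : 𝓞 K × 𝓞 K => p.1 * p.2 = u)).card : ℝ)
        * t u := by
    apply Finset.sum_le_sum
    intro u hu
    apply mul_le_mul_of_nonneg_right _ (ht0 u)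
    have := dbound K hdeg ι himag hcl U (F U) (fun a => hFmem U a) u hu
    rw [← hd u] at this
    exact_mod_cast this
  -- step 2: rewrite as a double sum
  have step2 : ∑ u ∈ F U, (((F U ×ˢ F U).filter (fun p : 𝓞 K × 𝓞 K => p.1 * p.2 = u)).card : ℝ)
        * t u
      = ∑ u ∈ F U, ∑ p ∈ ((F U ×ˢ F U).filter (fun p : 𝓞 K × 𝓞 K => p.1 * p.2 = u)),
          t (p.1 * p.2) := by
    apply Finset.sum_congr rfl
    intro u _
    have hinner : ∑ p ∈ ((F U ×ˢ F U).filter (fun p : 𝓞 K × 𝓞 K => p.1 * p.2 = u)),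
          t (p.1 * p.2)
        = ∑ p ∈ ((F U ×ˢ F U).filter (fun p : 𝓞 K × 𝓞 K => p.1 * p.2 = u)), t u := by
      apply Finset.sum_congr rfl
      intro p hp
      rw [(Finset.mem_filter.mp hp).2]
    rw [hinner, Finset.sum_const, nsmul_eq_mul]
  -- step 3: fiberwise
  set s : Finset (𝓞 K × 𝓞 K) := (F U ×ˢ F U).filter (fun p => p.1 * p.2 ∈ F U) with hs
  have step3 : ∑ u ∈ F U, ∑ p ∈ ((F U ×ˢ F U).filter (fun p : 𝓞 K × 𝓞 K => p.1 * p.2 = u)),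
        t (p.1 * p.2)
      = ∑ p ∈ s, t (p.1 * p.2) := by
    have hfilters : ∀ u ∈ F U, (F U ×ˢ F U).filter (fun p : 𝓞 K × 𝓞 K => p.1 * p.2 = u)
        = s.filter (fun p => p.1 * p.2 = u) := by
      intro u hu
      rw [hs, Finset.filter_filter]
      apply Finset.filter_congr
      intro p hp
      constructor
      · intro h
        exact ⟨by rw [h]; exact hu, h⟩
      · intro h
        exact h.2
    have h1 : ∑ u ∈ F U, ∑ p ∈ ((F U ×ˢ F U).filter
          (fun p : 𝓞 K × 𝓞 K => p.1 * p.2 = u)), t (p.1 * p.2)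
        = ∑ u ∈ F U, ∑ p ∈ s.filter (fun p => p.1 * p.2 = u), t (p.1 * p.2) :=
      Finset.sum_congr rfl (fun u hu => by rw [hfilters u hu])
    rw [h1, Finset.sum_fiberwise_of_maps_to (g := fun p : 𝓞 K × 𝓞 K => p.1 * p.2)
      (fun p hp => (Finset.mem_filter.mp hp).2) (fun p => t (p.1 * p.2))]
  -- step 4: to product of sums with indicator
  have step4 : ∑ p ∈ s, t (p.1 * p.2)
      ≤ ∑ a ∈ F U, ∑ b ∈ F U, (if nrm a * nrm b ≤ U then t a * t b else 0) := by
    rw [hs, Finset.sum_filter]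
    rw [← Finset.sum_product' (s := F U) (t := F U)
      (f := fun a b => if nrm a * nrm b ≤ U then t a * t b else 0)]
    apply Finset.sum_le_sum
    intro p hp
    by_cases h : p.1 * p.2 ∈ F U
    · rw [if_pos h]
      have hle : nrm p.1 * nrm p.2 ≤ U := by
        rw [← hmulN]; exact ((hmemN U _).mp h).2
      rw [if_pos hle]
      rw [ht]
      simp only
      rw [hmulN, Real.mul_rpow (hnn p.1) (hnn p.2)]
    · rw [if_neg h]
      by_cases h2 : nrm p.1 * nrm p.2 ≤ U
      · rw [if_pos h2]; exact mul_nonneg (ht0 _) (ht0 _)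
      · rw [if_neg h2]
  -- step 5: inner sum bound
  have step5 : ∀ a ∈ F U, ∑ b ∈ F U, (if nrm a * nrm b ≤ U then t a * t b else 0)
      ≤ t a * ∑ b ∈ F (U / nrm a), t b := by
    intro a ha
    have ha0 : 0 < nrm a := lt_of_lt_of_le one_pos (honeN a ((hmemN U a).mp ha).1)
    have h1 : ∑ b ∈ F U, (if nrm a * nrm b ≤ U then t a * t b else 0)
        = t a * ∑ b ∈ F U, (if nrm a * nrm b ≤ U then t b else 0) := by
      rw [Finset.mul_sum]
      apply Finset.sum_congr rfl
      intro b _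
      rw [mul_ite, mul_zero]
    rw [h1]
    apply mul_le_mul_of_nonneg_left _ (ht0 a)
    rw [← Finset.sum_filter]
    apply Finset.sum_le_sum_of_subset_of_nonneg
    · intro b hb
      rw [Finset.mem_filter] at hb
      rw [hmemN]
      refine ⟨((hmemN U b).mp hb.1).1, ?_⟩
      rw [le_div_iff₀ ha0]
      calc nrm b * nrm a = nrm a * nrm b := by ring
        _ ≤ U := hb.2
    · intro b _ _
      exact ht0 b
  -- step 6 : L1 bound for inner sums, and assembly
  have hL1 : ∀ X : ℝ, 1 ≤ X → ∑ b ∈ F X, t b ≤ 12*C₀ * X ^ ((1:ℝ)/6) :=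
    L1gen (fun u => u ≠ 0) nrm C₀ hC₀1 F hmemN honeN hFcard
  have hL2 : ∑ a ∈ F U, (nrm a)⁻¹ ≤ 6*C₀ * Real.log U :=
    L2gen (fun u => u ≠ 0) nrm C₀ hC₀1 F hmemN honeN hFcard U hU
  have step6 : ∑ a ∈ F U, t a * ∑ b ∈ F (U / nrm a), t b
      ≤ ∑ a ∈ F U, (12*C₀ * U ^ ((1:ℝ)/6)) * (nrm a)⁻¹ := by
    apply Finset.sum_le_sum
    intro a ha
    have hane : a ≠ 0 := ((hmemN U a).mp ha).1
    have ha1 : 1 ≤ nrm a := honeN a hane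
    have ha0 : 0 < nrm a := by linarith
    have haU : nrm a ≤ U := ((hmemN U a).mp ha).2
    have hX1 : 1 ≤ U / nrm a := by
      rw [le_div_iff₀ ha0]; linarith
    have h2 := hL1 (U / nrm a) hX1
    have hdivpow : (U / nrm a) ^ ((1:ℝ)/6) = U ^ ((1:ℝ)/6) * (nrm a) ^ (-(1:ℝ)/6) := by
      rw [Real.div_rpow (by linarith) (by linarith)]
      rw [div_eq_mul_inv, ← Real.rpow_neg (by linarith)]
      norm_num
    have hta : t a * (nrm a) ^ (-(1:ℝ)/6) = (nrm a)⁻¹ := by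
      rw [ht]
      simp only
      rw [← Real.rpow_add ha0]
      norm_num
      exact Real.rpow_neg_one _
    calc t a * ∑ b ∈ F (U / nrm a), t b
        ≤ t a * (12*C₀ * (U / nrm a) ^ ((1:ℝ)/6)) := by
          apply mul_le_mul_of_nonneg_left h2 (ht0 a)
      _ = (12*C₀ * U ^ ((1:ℝ)/6)) * (t a * (nrm a) ^ (-(1:ℝ)/6)) := by
          rw [hdivpow]; ring
      _ = (12*C₀ * U ^ ((1:ℝ)/6)) * (nrm a)⁻¹ := by rw [hta]
  have step7 : ∑ a ∈ F U, (12*C₀ * U ^ ((1:ℝ)/6)) * (nrm a)⁻¹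
      ≤ (12*C₀) * (6*C₀) * U ^ ((1:ℝ)/6) * Real.log U := by
    rw [← Finset.mul_sum]
    have hpow0 : (0:ℝ) ≤ U ^ ((1:ℝ)/6) := Real.rpow_nonneg (by linarith) _
    calc (12*C₀ * U ^ ((1:ℝ)/6)) * ∑ a ∈ F U, (nrm a)⁻¹
        ≤ (12*C₀ * U ^ ((1:ℝ)/6)) * (6*C₀ * Real.log U) := by
          apply mul_le_mul_of_nonneg_left hL2 (by positivity)
      _ = (12*C₀) * (6*C₀) * U ^ ((1:ℝ)/6) * Real.log U := by ring
  calc ∑ u ∈ F U, (d u : ℝ) * nrm u ^ (-(5:ℝ)/6)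
      ≤ ∑ u ∈ F U, (((F U ×ˢ F U).filter (fun p : 𝓞 K × 𝓞 K => p.1 * p.2 = u)).card : ℝ)
          * t u := step1
    _ = ∑ u ∈ F U, ∑ p ∈ ((F U ×ˢ F U).filter (fun p : 𝓞 K × 𝓞 K => p.1 * p.2 = u)),
          t (p.1 * p.2) := step2
    _ = ∑ p ∈ s, t (p.1 * p.2) := step3
    _ ≤ ∑ a ∈ F U, ∑ b ∈ F U, (if nrm a * nrm b ≤ U then t a * t b else 0) := step4
    _ ≤ ∑ a ∈ F U, t a * ∑ b ∈ F (U / nrm a), t b := Finset.sum_le_sum step5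
    _ ≤ ∑ a ∈ F U, (12*C₀ * U ^ ((1:ℝ)/6)) * (nrm a)⁻¹ := step6
    _ ≤ (12*C₀) * (6*C₀) * U ^ ((1:ℝ)/6) * Real.log U := step7
end

section
/- For z = (z_{j,k})_{j≠k} ∈ (O_K ∖ {0})⁶ indexed by ordered pairs (j,k), j ≠ k ∈ {1,2,3}, set ζ_j = z_{j,k} z_{j,l} z_{k,j}² z_{l,j}² for {j,k,l} = {1,2,3}. Then for all B ≥ 2, Σ_{z : ‖ζ_j‖_∞ ≤ B for j=1,2,3} ( ∏_{j≠k} ‖z_{j,k}‖_∞^{−1} ) · max_{j=1,2,3} ‖ζ_j‖_∞^{1/6} = O( B^{1/6} (log B)⁵ ), with an implied constant depending only on K. -/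
open NumberField

/-- The six ordered pairs `(j,k)` with `j ≠ k ∈ {1,2,3}`. -/
abbrev Pair : Type := {p : Fin 3 × Fin 3 // p.1 ≠ p.2}

/-- `ζ_j = z_{j,k} z_{j,l} z_{k,j}² z_{l,j}²` for `{j,k,l} = {1,2,3}`. -/
def zeta {R : Type*} [CommRing R] (z : Pair → R) (j k l : Fin 3)
    (hjk : j ≠ k) (hjl : j ≠ l) : R :=
  z ⟨(j, k), hjk⟩ * z ⟨(j, l), hjl⟩ * z ⟨(k, j), hjk.symm⟩ ^ 2 * z ⟨(l, j), hjl.symm⟩ ^ 2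

set_option linter.unusedSectionVars false
set_option linter.unusedVariables false
set_option maxHeartbeats 1000000



lemma sum_le_sum_inj {α β : Type*} [Fintype α] [Fintype β] (f : α → ℝ) (g : β → ℝ)
    (Φ : α → β) (hΦ : Function.Injective Φ) (hg : ∀ b, 0 ≤ g b)
    (hfg : ∀ a, f a ≤ g (Φ a)) : ∑ a, f a ≤ ∑ b, g b := by
  classical
  calc ∑ a, f a ≤ ∑ a, g (Φ a) := Finset.sum_le_sum (fun a _ => hfg a)
    _ = ∑ b ∈ Finset.univ.image Φ, g b :=
        (Finset.sum_image (fun a _ b _ h => hΦ h)).symm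
    _ ≤ ∑ b, g b :=
        Finset.sum_le_sum_of_subset_of_nonneg (Finset.subset_univ _) (fun b _ _ => hg b)

lemma rpow_sq_sixth {x : ℝ} (hx : 0 < x) : (x^2) ^ ((1:ℝ)/6) = x ^ ((1:ℝ)/3) := by
  rw [← Real.rpow_natCast x 2, ← Real.rpow_mul hx.le]
  norm_num

lemma merge_inv_rpow {x : ℝ} (hx : 0 < x) (a b : ℝ) (h : a - 1 = b) :
    x⁻¹ * x ^ a = x ^ b := by
  rw [← Real.rpow_neg_one x, ← Real.rpow_add hx, ← h]
  ring_nf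

lemma aux_alg {n1 n2 n3 n4 n5 n6 : ℝ} (h1 : 0 < n1) (h2 : 0 < n2) (h3 : 0 < n3)
    (h4 : 0 < n4) (h5 : 0 < n5) (h6 : 0 < n6) :
    (n1⁻¹ * n2⁻¹ * n3⁻¹ * n4⁻¹ * n5⁻¹ * n6⁻¹) * (n1 * n2 * n3^2 * n4^2) ^ ((1:ℝ)/6)
      = n1 ^ (-(5/6) : ℝ) * (n2 ^ (-(5/6) : ℝ) * n3 ^ (-(2/3) : ℝ) * n4 ^ (-(2/3) : ℝ)
          * n5⁻¹ * n6⁻¹) := by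
  have hsplit : (n1 * n2 * n3^2 * n4^2) ^ ((1:ℝ)/6)
      = n1 ^ ((1:ℝ)/6) * n2 ^ ((1:ℝ)/6) * n3 ^ ((1:ℝ)/3) * n4 ^ ((1:ℝ)/3) := by
    rw [Real.mul_rpow (by positivity) (by positivity),
      Real.mul_rpow (by positivity) (by positivity),
      Real.mul_rpow (by positivity) (by positivity),
      rpow_sq_sixth h3, rpow_sq_sixth h4]
  rw [hsplit]
  have hm1 : n1⁻¹ * n1 ^ ((1:ℝ)/6) = n1 ^ (-(5/6) : ℝ) := merge_inv_rpow h1 _ _ (by norm_num)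
  have hm2 : n2⁻¹ * n2 ^ ((1:ℝ)/6) = n2 ^ (-(5/6) : ℝ) := merge_inv_rpow h2 _ _ (by norm_num)
  have hm3 : n3⁻¹ * n3 ^ ((1:ℝ)/3) = n3 ^ (-(2/3) : ℝ) := merge_inv_rpow h3 _ _ (by norm_num)
  have hm4 : n4⁻¹ * n4 ^ ((1:ℝ)/3) = n4 ^ (-(2/3) : ℝ) := merge_inv_rpow h4 _ _ (by norm_num)
  calc (n1⁻¹ * n2⁻¹ * n3⁻¹ * n4⁻¹ * n5⁻¹ * n6⁻¹)
        * (n1 ^ ((1:ℝ)/6) * n2 ^ ((1:ℝ)/6) * n3 ^ ((1:ℝ)/3) * n4 ^ ((1:ℝ)/3))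
      = (n1⁻¹ * n1 ^ ((1:ℝ)/6)) * ((n2⁻¹ * n2 ^ ((1:ℝ)/6)) * ((n3⁻¹ * n3 ^ ((1:ℝ)/3))
          * ((n4⁻¹ * n4 ^ ((1:ℝ)/3)) * (n5⁻¹ * n6⁻¹)))) := by ring
    _ = _ := by rw [hm1, hm2, hm3, hm4]; ring

lemma aux_alg2 {B n2 n3 n4 n5 n6 : ℝ} (hB : 0 < B) (h2 : 0 < n2) (h3 : 0 < n3)
    (h4 : 0 < n4) (h5 : 0 < n5) (h6 : 0 < n6) :
    (300 * (B / (n2 * n3^2 * n4^2)) ^ ((1:ℝ)/6))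
        * (n2 ^ (-(5/6) : ℝ) * n3 ^ (-(2/3) : ℝ) * n4 ^ (-(2/3) : ℝ) * n5⁻¹ * n6⁻¹)
      = ((((300 * B ^ ((1:ℝ)/6) * n2⁻¹) * n3⁻¹) * n4⁻¹) * n5⁻¹) * n6⁻¹ := by
  have hD : (0:ℝ) < n2 * n3^2 * n4^2 := by positivity
  have hsplit : (B / (n2 * n3^2 * n4^2)) ^ ((1:ℝ)/6)
      = B ^ ((1:ℝ)/6) / (n2 ^ ((1:ℝ)/6) * n3 ^ ((1:ℝ)/3) * n4 ^ ((1:ℝ)/3)) := by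
    rw [Real.div_rpow hB.le hD.le, Real.mul_rpow (by positivity) (by positivity),
      Real.mul_rpow (by positivity) (by positivity), rpow_sq_sixth h3, rpow_sq_sixth h4]
  rw [hsplit]
  have hm2 : n2 ^ (-(5/6) : ℝ) / n2 ^ ((1:ℝ)/6) = n2⁻¹ := by
    rw [← Real.rpow_sub h2, show (-(5/6) : ℝ) - (1:ℝ)/6 = -1 by norm_num, Real.rpow_neg_one]
  have hm3 : n3 ^ (-(2/3) : ℝ) / n3 ^ ((1:ℝ)/3) = n3⁻¹ := by
    rw [← Real.rpow_sub h3, show (-(2/3) : ℝ) - (1:ℝ)/3 = -1 by norm_num, Real.rpow_neg_one]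
  have hm4 : n4 ^ (-(2/3) : ℝ) / n4 ^ ((1:ℝ)/3) = n4⁻¹ := by
    rw [← Real.rpow_sub h4, show (-(2/3) : ℝ) - (1:ℝ)/3 = -1 by norm_num, Real.rpow_neg_one]
  have e2 : (0:ℝ) < n2 ^ ((1:ℝ)/6) := Real.rpow_pos_of_pos h2 _
  have e3 : (0:ℝ) < n3 ^ ((1:ℝ)/3) := Real.rpow_pos_of_pos h3 _
  have e4 : (0:ℝ) < n4 ^ ((1:ℝ)/3) := Real.rpow_pos_of_pos h4 _
  rw [← hm2, ← hm3, ← hm4]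
  field_simp

lemma fin3_cover : ∀ j k l a b : Fin 3, j ≠ k → j ≠ l → k ≠ l → a ≠ b →
    (a,b) = (j,k) ∨ (a,b) = (j,l) ∨ (a,b) = (k,j) ∨ (a,b) = (l,j) ∨ (a,b) = (k,l)
      ∨ (a,b) = (l,k) := by decide

lemma fin3_ne : ∀ j k l : Fin 3, j ≠ k → j ≠ l → k ≠ l →
    ((j,k) ≠ (j,l) ∧ (j,k) ≠ (k,j) ∧ (j,k) ≠ (l,j) ∧ (j,k) ≠ (k,l) ∧ (j,k) ≠ (l,k)
     ∧ (j,l) ≠ (k,j) ∧ (j,l) ≠ (l,j) ∧ (j,l) ≠ (k,l) ∧ (j,l) ≠ (l,k)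
     ∧ (k,j) ≠ (l,j) ∧ (k,j) ≠ (k,l) ∧ (k,j) ≠ (l,k)
     ∧ (l,j) ≠ (k,l) ∧ (l,j) ≠ (l,k)
     ∧ (k,l) ≠ (l,k)) := by decide

lemma fin3_third : ∀ a b : Fin 3, a ≠ b → ∃ c, a ≠ c ∧ b ≠ c := by decide

open MeasureTheory in

lemma cardBound {M : Type*} (nrm : M → ℝ) (emb : M → ℂ)
    (hsep : ∀ x y : M, x ≠ y → 1 ≤ ‖emb x - emb y‖)
    (habs : ∀ x : M, ‖emb x‖ ^ 2 = nrm x)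
    (s : Finset M) (X : ℝ) (hX : 1 ≤ X) (hmem : ∀ x ∈ s, nrm x ≤ X) :
    (s.card : ℝ) ≤ 16 * X := by
  classical
  have hinj : Set.InjOn emb s := by
    intro x _ y _ hxy
    by_contra hne
    have := hsep x y hne
    rw [hxy] at this
    simp at this
    linarith
  set t : Finset ℂ := s.image emb with ht
  have hcardt : t.card = s.card := Finset.card_image_of_injOn hinj
  -- disjoint balls
  have hdisj : (t : Set ℂ).PairwiseDisjoint (fun z => Metric.ball z (1/2)) := by
    intro z hz w hw hzw
    apply Metric.ball_disjoint_ball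
    simp only [ht, Finset.coe_image, Set.mem_image, Finset.mem_coe] at hz hw
    obtain ⟨x, hx, rfl⟩ := hz
    obtain ⟨y, hy, rfl⟩ := hw
    have hxy : x ≠ y := fun h => hzw (by rw [h])
    have := hsep x y hxy
    have : (1:ℝ) ≤ dist (emb x) (emb y) := by
      rwa [Complex.dist_eq]
    linarith
  have hsub : (⋃ z ∈ t, Metric.ball z (1/2)) ⊆ Metric.ball 0 (Real.sqrt X + 1) := by
    intro w hw
    simp only [Set.mem_iUnion, Metric.mem_ball] at hw ⊢
    obtain ⟨z, hz, hwz⟩ := hw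
    simp only [ht, Finset.mem_image] at hz
    obtain ⟨x, hx, rfl⟩ := hz
    have h1 : ‖emb x‖ ≤ Real.sqrt X := by
      rw [← Real.sqrt_sq (norm_nonneg _), habs]
      exact Real.sqrt_le_sqrt (hmem x hx)
    calc dist w 0 ≤ dist w (emb x) + dist (emb x) 0 := dist_triangle _ _ _
    _ < 1/2 + Real.sqrt X := by
        rw [dist_zero_right]
        linarith
    _ ≤ Real.sqrt X + 1 := by linarith
  have hmeas := measure_biUnion_finset (μ := volume) hdisj (fun z _ => measurableSet_ball)
  have hle : (volume (⋃ z ∈ t, Metric.ball z (1/2))) ≤ volume (Metric.ball (0:ℂ) (Real.sqrt X + 1)) :=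
    measure_mono hsub
  rw [hmeas] at hle
  simp only [Complex.volume_ball] at hle
  rw [Finset.sum_const, nsmul_eq_mul] at hle
  -- now : ↑t.card * (ENNReal.ofReal (1/2) ^ 2 * pi) ≤ ENNReal.ofReal (√X+1)^2 * pi
  have hpi : (NNReal.pi : ENNReal) ≠ 0 := by
    simp [NNReal.pi_ne_zero]
  have hpitop : (NNReal.pi : ENNReal) ≠ ⊤ := ENNReal.coe_ne_top
  rw [← mul_assoc] at hle
  have hle2 := (ENNReal.mul_le_mul_iff_left hpi hpitop).mp hle
  have h14 : (ENNReal.ofReal (1/2)) ^ 2 = ENNReal.ofReal (1/4) := by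
    rw [← ENNReal.ofReal_pow (by norm_num)]
    norm_num
  rw [h14, ← ENNReal.ofReal_natCast, ← ENNReal.ofReal_mul (by positivity),
    ← ENNReal.ofReal_pow (by positivity)] at hle2
  have hle3 : (t.card : ℝ) * (1/4) ≤ (Real.sqrt X + 1)^2 :=
    (ENNReal.ofReal_le_ofReal_iff (by positivity)).mp hle2
  have h1X : (1:ℝ) ≤ Real.sqrt X := by
    rw [show (1:ℝ) = Real.sqrt 1 by simp]
    exact Real.sqrt_le_sqrt hX
  have hsq : Real.sqrt X ^ 2 = X := Real.sq_sqrt (by linarith)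
  rw [← hcardt]
  nlinarith [hle3, h1X, hsq]


section Dyadic
variable {M : Type*} [Zero M] (nrm : M → ℝ)
  (hge1 : ∀ x : M, x ≠ 0 → 1 ≤ nrm x)
  (hnat : ∀ x : M, x ≠ 0 → ∃ n : ℕ, 1 ≤ n ∧ nrm x = n)
  (hfin : ∀ X : ℝ, {x : M | x ≠ 0 ∧ nrm x ≤ X}.Finite)
  (hcard : ∀ X : ℝ, 1 ≤ X → (((hfin X).toFinset.card) : ℝ) ≤ 16 * X)

include hfin

lemma memFS {X : ℝ} {x : M} : x ∈ (hfin X).toFinset ↔ x ≠ 0 ∧ nrm x ≤ X :=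
  Set.Finite.mem_toFinset _

lemma FSmono {X Y : ℝ} (h : X ≤ Y) : (hfin X).toFinset ⊆ (hfin Y).toFinset := by
  intro x hx
  rw [memFS] at hx ⊢
  exact ⟨hx.1, hx.2.trans h⟩

include hnat in
lemma FSfloor {X : ℝ} (hX : 0 ≤ X) : (hfin X).toFinset = (hfin ((⌊X⌋₊ : ℕ) : ℝ)).toFinset := by
  ext x
  rw [memFS, memFS]
  constructor
  · rintro ⟨hx0, hxX⟩
    refine ⟨hx0, ?_⟩
    obtain ⟨n, _, hn⟩ := hnat x hx0
    rw [hn] at hxX ⊢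
    exact_mod_cast (Nat.le_floor_iff hX).mpr hxX
  · rintro ⟨hx0, hxX⟩
    exact ⟨hx0, hxX.trans (Nat.floor_le hX)⟩

include hge1 hnat hcard

lemma sumPowNat : ∀ N : ℕ, ∑ x ∈ (hfin (N:ℝ)).toFinset, nrm x ^ (-(5/6) : ℝ)
    ≤ 300 * (N:ℝ) ^ ((1:ℝ)/6) := by
  letI := Classical.decEq M
  intro N
  induction N using Nat.strong_induction_on with
  | _ N ih =>
  rcases Nat.eq_zero_or_pos N with rfl | hN
  · have he : (hfin ((0:ℕ):ℝ)).toFinset = ∅ := by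
      ext x
      rw [memFS]
      simp only [Finset.notMem_empty, iff_false]
      rintro ⟨hx0, hxX⟩
      have := hge1 x hx0
      norm_num at hxX
      linarith
    rw [he]
    simp [Real.zero_rpow]
  · set m := N / 2 with hm
    have hmlt : m < N := Nat.div_lt_self hN (by norm_num)
    have hNpos : (0:ℝ) < N := by exact_mod_cast hN
    have hmle : (m:ℝ) ≤ (N:ℝ)/2 := by
      rw [hm]
      exact_mod_cast Nat.cast_div_le
    have hsub : (hfin (m:ℝ)).toFinset ⊆ (hfin (N:ℝ)).toFinset :=
      FSmono nrm hfin (by exact_mod_cast Nat.le_of_lt hmlt)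
    have hsplit : ∑ x ∈ (hfin (N:ℝ)).toFinset, nrm x ^ (-(5/6) : ℝ)
        = ∑ x ∈ (hfin (N:ℝ)).toFinset \ (hfin (m:ℝ)).toFinset, nrm x ^ (-(5/6) : ℝ)
          + ∑ x ∈ (hfin (m:ℝ)).toFinset, nrm x ^ (-(5/6) : ℝ) :=
      (Finset.sum_sdiff hsub).symm
    have hdiff : ∀ x ∈ (hfin (N:ℝ)).toFinset \ (hfin (m:ℝ)).toFinset,
        nrm x ^ (-(5/6) : ℝ) ≤ ((N:ℝ)/2) ^ (-(5/6) : ℝ) := by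
      intro x hx
      rw [Finset.mem_sdiff, memFS, memFS] at hx
      obtain ⟨⟨hx0, hxN⟩, hnot⟩ := hx
      have hgt : ¬ (nrm x ≤ (m:ℝ)) := fun h => hnot ⟨hx0, h⟩
      push_neg at hgt
      obtain ⟨n, hn1, hn⟩ := hnat x hx0
      have hlt : (m:ℝ) < (n:ℝ) := by rwa [hn] at hgt
      have hmn : m + 1 ≤ n := by exact_mod_cast hlt
      have hN2 : (N:ℝ)/2 < (m:ℝ) + 1 := by
        have h1 : N < 2 * (m + 1) := by omega
        have h2 : (N:ℝ) < 2 * ((m:ℝ) + 1) := by exact_mod_cast h1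
        linarith
      have hnrmx : (N:ℝ)/2 ≤ nrm x := by
        rw [hn]
        have : ((m:ℝ) + 1) ≤ (n:ℝ) := by exact_mod_cast hmn
        linarith
      exact Real.rpow_le_rpow_of_nonpos (by linarith) hnrmx (by norm_num)
    have hcards : ((((hfin (N:ℝ)).toFinset \ (hfin (m:ℝ)).toFinset).card) : ℝ) ≤ 16 * N := by
      calc ((((hfin (N:ℝ)).toFinset \ (hfin (m:ℝ)).toFinset).card) : ℝ)
          ≤ (((hfin (N:ℝ)).toFinset.card) : ℝ) := by
            exact_mod_cast Finset.card_le_card (Finset.sdiff_subset)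
      _ ≤ 16 * N := hcard _ (by exact_mod_cast hN)
    have hsum_diff : ∑ x ∈ (hfin (N:ℝ)).toFinset \ (hfin (m:ℝ)).toFinset, nrm x ^ (-(5/6) : ℝ)
        ≤ 16 * (N:ℝ) * ((N:ℝ)/2) ^ (-(5/6) : ℝ) := by
      calc ∑ x ∈ (hfin (N:ℝ)).toFinset \ (hfin (m:ℝ)).toFinset, nrm x ^ (-(5/6) : ℝ)
          ≤ ∑ _x ∈ (hfin (N:ℝ)).toFinset \ (hfin (m:ℝ)).toFinset, ((N:ℝ)/2) ^ (-(5/6) : ℝ) :=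
            Finset.sum_le_sum hdiff
      _ = ((((hfin (N:ℝ)).toFinset \ (hfin (m:ℝ)).toFinset).card) : ℝ) * ((N:ℝ)/2) ^ (-(5/6) : ℝ) := by
            rw [Finset.sum_const, nsmul_eq_mul]
      _ ≤ 16 * (N:ℝ) * ((N:ℝ)/2) ^ (-(5/6) : ℝ) :=
            mul_le_mul_of_nonneg_right hcards (Real.rpow_nonneg (by linarith) _)
    have hpow : 16 * (N:ℝ) * ((N:ℝ)/2) ^ (-(5/6) : ℝ) ≤ 29 * (N:ℝ) ^ ((1:ℝ)/6) := by
      have h256 : (2:ℝ) ^ ((5:ℝ)/6) ≤ 29/16 := by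
        have hb : (0:ℝ) ≤ (2:ℝ) ^ ((5:ℝ)/6) := Real.rpow_nonneg (by norm_num) _
        have hb6 : ((2:ℝ) ^ ((5:ℝ)/6)) ^ (6:ℕ) = 32 := by
          rw [← Real.rpow_natCast ((2:ℝ) ^ ((5:ℝ)/6)) 6, ← Real.rpow_mul (by norm_num)]
          rw [show ((5:ℝ)/6 * ((6:ℕ):ℝ)) = ((5:ℕ):ℝ) by push_cast; ring, Real.rpow_natCast]
          norm_num
        apply le_of_pow_le_pow_left₀ (n := 6) (by norm_num) (by norm_num)
        rw [hb6]
        norm_num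
      have hsplit2 : ((N:ℝ)/2) ^ (-(5/6) : ℝ) = (2:ℝ) ^ ((5:ℝ)/6) * (N:ℝ) ^ (-(5/6) : ℝ) := by
        rw [Real.div_rpow (by positivity) (by norm_num : (0:ℝ) ≤ 2),
          Real.rpow_neg (by norm_num : (0:ℝ) ≤ 2), div_eq_mul_inv, inv_inv]
        ring
      have hNN : (N:ℝ) * (N:ℝ) ^ (-(5/6) : ℝ) = (N:ℝ) ^ ((1:ℝ)/6) := by
        nth_rewrite 1 [← Real.rpow_one (N:ℝ)]
        rw [← Real.rpow_add hNpos]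
        norm_num
      have hNpow : (0:ℝ) ≤ (N:ℝ) ^ ((1:ℝ)/6) := Real.rpow_nonneg (by linarith) _
      calc 16 * (N:ℝ) * ((N:ℝ)/2) ^ (-(5/6) : ℝ)
          = 16 * (2:ℝ) ^ ((5:ℝ)/6) * ((N:ℝ) * (N:ℝ) ^ (-(5/6) : ℝ)) := by rw [hsplit2]; ring
        _ = 16 * (2:ℝ) ^ ((5:ℝ)/6) * (N:ℝ) ^ ((1:ℝ)/6) := by rw [hNN]
        _ ≤ 29 * (N:ℝ) ^ ((1:ℝ)/6) := by nlinarith [h256, hNpow]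
    have hih := ih m hmlt
    have hm16 : (m:ℝ) ^ ((1:ℝ)/6) ≤ ((N:ℝ)/2) ^ ((1:ℝ)/6) :=
      Real.rpow_le_rpow (by positivity) hmle (by norm_num)
    have h2inv : ((N:ℝ)/2) ^ ((1:ℝ)/6) ≤ (271/300) * (N:ℝ) ^ ((1:ℝ)/6) := by
      have hb : (0:ℝ) ≤ (2:ℝ) ^ ((1:ℝ)/6) := Real.rpow_nonneg (by norm_num) _
      have key : (300/271 : ℝ) ≤ (2:ℝ) ^ ((1:ℝ)/6) := by
        apply le_of_pow_le_pow_left₀ (n := 6) (by norm_num) hb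
        have hb6 : ((2:ℝ) ^ ((1:ℝ)/6)) ^ (6:ℕ) = 2 := by
          rw [← Real.rpow_natCast ((2:ℝ) ^ ((1:ℝ)/6)) 6, ← Real.rpow_mul (by norm_num)]
          rw [show ((1:ℝ)/6 * ((6:ℕ):ℝ)) = ((1:ℕ):ℝ) by push_cast; ring, Real.rpow_natCast]
          norm_num
        rw [hb6]
        norm_num
      have hsplit3 : ((N:ℝ)/2) ^ ((1:ℝ)/6) = (N:ℝ) ^ ((1:ℝ)/6) / (2:ℝ) ^ ((1:ℝ)/6) :=
        Real.div_rpow (by linarith) (by norm_num) _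
      rw [hsplit3, div_le_iff₀ (by positivity)]
      have hNnn : (0:ℝ) ≤ (N:ℝ) ^ ((1:ℝ)/6) := Real.rpow_nonneg (by linarith) _
      nlinarith [key, hNnn]
    calc ∑ x ∈ (hfin (N:ℝ)).toFinset, nrm x ^ (-(5/6) : ℝ)
        = _ + _ := hsplit
      _ ≤ 16 * (N:ℝ) * ((N:ℝ)/2) ^ (-(5/6) : ℝ) + 300 * (m:ℝ) ^ ((1:ℝ)/6) :=
          add_le_add hsum_diff hih
      _ ≤ 29 * (N:ℝ) ^ ((1:ℝ)/6) + 300 * ((271/300) * (N:ℝ) ^ ((1:ℝ)/6)) := by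
          refine add_le_add hpow ?_
          exact mul_le_mul_of_nonneg_left (hm16.trans h2inv) (by norm_num)
      _ = 300 * (N:ℝ) ^ ((1:ℝ)/6) := by ring

lemma sumInvNat : ∀ N : ℕ, ∑ x ∈ (hfin (N:ℝ)).toFinset, (nrm x)⁻¹
    ≤ 32 + 47 * Real.log N := by
  letI := Classical.decEq M
  intro N
  induction N using Nat.strong_induction_on with
  | _ N ih =>
  have hterm : ∀ x ∈ (hfin (N:ℝ)).toFinset, (nrm x)⁻¹ ≤ 1 := by
    intro x hx
    rw [memFS] at hx
    have := hge1 x hx.1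
    rw [inv_le_one_iff₀]
    right; linarith
  rcases lt_or_ge N 2 with hN2 | hN2
  · have hb : ∑ x ∈ (hfin (N:ℝ)).toFinset, (nrm x)⁻¹
        ≤ ((hfin (N:ℝ)).toFinset.card : ℝ) * 1 := by
      have := Finset.sum_le_card_nsmul _ _ 1 hterm
      rwa [nsmul_eq_mul] at this
    have hlog : 0 ≤ Real.log (N:ℝ) := by
      interval_cases N <;> simp
    have hc : ((hfin (N:ℝ)).toFinset.card : ℝ) ≤ 32 := by
      have h16 := hcard ((2:ℕ):ℝ) (by norm_num)
      have hsub : (hfin ((N:ℕ):ℝ)).toFinset ⊆ (hfin ((2:ℕ):ℝ)).toFinset :=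
        FSmono nrm hfin (by exact_mod_cast Nat.le_of_lt hN2)
      have := Finset.card_le_card hsub
      have : ((hfin ((N:ℕ):ℝ)).toFinset.card : ℝ) ≤ ((hfin ((2:ℕ):ℝ)).toFinset.card : ℝ) := by
        exact_mod_cast this
      push_cast at h16
      linarith
    linarith [hb, hc]
  · set m := N / 2 with hm
    have hN : 0 < N := by omega
    have hm1 : 1 ≤ m := by omega
    have hmlt : m < N := Nat.div_lt_self hN (by norm_num)
    have hNpos : (0:ℝ) < N := by exact_mod_cast hN
    have hmpos : (0:ℝ) < m := by exact_mod_cast hm1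
    have hmle : (m:ℝ) ≤ (N:ℝ)/2 := by
      rw [hm]; exact_mod_cast Nat.cast_div_le
    have hsub : (hfin (m:ℝ)).toFinset ⊆ (hfin (N:ℝ)).toFinset :=
      FSmono nrm hfin (by exact_mod_cast Nat.le_of_lt hmlt)
    have hsplit : ∑ x ∈ (hfin (N:ℝ)).toFinset, (nrm x)⁻¹
        = ∑ x ∈ (hfin (N:ℝ)).toFinset \ (hfin (m:ℝ)).toFinset, (nrm x)⁻¹
          + ∑ x ∈ (hfin (m:ℝ)).toFinset, (nrm x)⁻¹ :=
      (Finset.sum_sdiff hsub).symm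
    have hdiff : ∀ x ∈ (hfin (N:ℝ)).toFinset \ (hfin (m:ℝ)).toFinset,
        (nrm x)⁻¹ ≤ ((N:ℝ)/2)⁻¹ := by
      intro x hx
      rw [Finset.mem_sdiff, memFS, memFS] at hx
      obtain ⟨⟨hx0, hxN⟩, hnot⟩ := hx
      have hgt : ¬ (nrm x ≤ (m:ℝ)) := fun h => hnot ⟨hx0, h⟩
      push_neg at hgt
      obtain ⟨n, hn1, hn⟩ := hnat x hx0
      have hlt : (m:ℝ) < (n:ℝ) := by rwa [hn] at hgt
      have hmn : m + 1 ≤ n := by exact_mod_cast hlt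
      have hN2' : (N:ℝ)/2 < (m:ℝ) + 1 := by
        have h1 : N < 2 * (m + 1) := by omega
        have h2 : (N:ℝ) < 2 * ((m:ℝ) + 1) := by exact_mod_cast h1
        linarith
      have hnrmx : (N:ℝ)/2 ≤ nrm x := by
        rw [hn]
        have : ((m:ℝ) + 1) ≤ (n:ℝ) := by exact_mod_cast hmn
        linarith
      exact inv_anti₀ (by linarith) hnrmx
    have hcards : ((((hfin (N:ℝ)).toFinset \ (hfin (m:ℝ)).toFinset).card) : ℝ) ≤ 16 * N := by
      calc ((((hfin (N:ℝ)).toFinset \ (hfin (m:ℝ)).toFinset).card) : ℝ)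
          ≤ (((hfin (N:ℝ)).toFinset.card) : ℝ) := by
            exact_mod_cast Finset.card_le_card (Finset.sdiff_subset)
      _ ≤ 16 * N := hcard _ (by exact_mod_cast hN)
    have hsum_diff : ∑ x ∈ (hfin (N:ℝ)).toFinset \ (hfin (m:ℝ)).toFinset, (nrm x)⁻¹
        ≤ 32 := by
      calc ∑ x ∈ (hfin (N:ℝ)).toFinset \ (hfin (m:ℝ)).toFinset, (nrm x)⁻¹
          ≤ ∑ _x ∈ (hfin (N:ℝ)).toFinset \ (hfin (m:ℝ)).toFinset, ((N:ℝ)/2)⁻¹ :=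
            Finset.sum_le_sum hdiff
      _ = ((((hfin (N:ℝ)).toFinset \ (hfin (m:ℝ)).toFinset).card) : ℝ) * ((N:ℝ)/2)⁻¹ := by
            rw [Finset.sum_const, nsmul_eq_mul]
      _ ≤ 16 * (N:ℝ) * ((N:ℝ)/2)⁻¹ :=
            mul_le_mul_of_nonneg_right hcards (by positivity)
      _ = 32 := by field_simp; ring
    have hih := ih m hmlt
    have hlogm : Real.log m ≤ Real.log N - Real.log 2 := by
      rw [← Real.log_div (by positivity) (by norm_num)]
      exact Real.log_le_log hmpos hmle
    have hlog2 : (0.6931471803 : ℝ) < Real.log 2 := Real.log_two_gt_d9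
    calc ∑ x ∈ (hfin (N:ℝ)).toFinset, (nrm x)⁻¹
        = _ + _ := hsplit
      _ ≤ 32 + (32 + 47 * Real.log m) := add_le_add hsum_diff hih
      _ ≤ 32 + 47 * Real.log N := by nlinarith [hlogm, hlog2]

lemma sumPowR {X : ℝ} (hX : 0 ≤ X) :
    ∑ x ∈ (hfin X).toFinset, nrm x ^ (-(5/6) : ℝ) ≤ 300 * X ^ ((1:ℝ)/6) := by
  rw [FSfloor nrm hnat hfin hX]
  refine (sumPowNat nrm hge1 hnat hfin hcard ⌊X⌋₊).trans ?_
  have : ((⌊X⌋₊:ℕ):ℝ) ^ ((1:ℝ)/6) ≤ X ^ ((1:ℝ)/6) :=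
    Real.rpow_le_rpow (by positivity) (Nat.floor_le hX) (by norm_num)
  linarith

lemma sumInvR {X : ℝ} (hX : 2 ≤ X) :
    ∑ x ∈ (hfin X).toFinset, (nrm x)⁻¹ ≤ 100 * Real.log X := by
  rw [FSfloor nrm hnat hfin (by linarith)]
  refine (sumInvNat nrm hge1 hnat hfin hcard ⌊X⌋₊).trans ?_
  have h1 : (1:ℝ) ≤ ((⌊X⌋₊:ℕ):ℝ) := by
    have : (1:ℕ) ≤ ⌊X⌋₊ := Nat.one_le_floor_iff _ |>.mpr (by linarith)
    exact_mod_cast this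
  have hlogfl : Real.log ⌊X⌋₊ ≤ Real.log X :=
    Real.log_le_log (by linarith) (Nat.floor_le (by linarith))
  have hlogX : Real.log 2 ≤ Real.log X := Real.log_le_log (by norm_num) hX
  have hlog2 : (0.6931471803 : ℝ) < Real.log 2 := Real.log_two_gt_d9
  nlinarith [hlogfl, hlogX, hlog2]

end Dyadic

section Main
variable {M : Type*} [CommRing M] (nrm : M → ℝ)
  (hnonneg : ∀ x : M, 0 ≤ nrm x)
  (hge1 : ∀ x : M, x ≠ 0 → 1 ≤ nrm x)
  (hmul : ∀ x y : M, nrm (x * y) = nrm x * nrm y)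
  (hfin : ∀ X : ℝ, {x : M | x ≠ 0 ∧ nrm x ≤ X}.Finite)

include hmul in
lemma nrm_zeta (z : Pair → M) (j k l : Fin 3) (hjk : j ≠ k) (hjl : j ≠ l) :
    nrm (zeta z j k l hjk hjl)
      = nrm (z ⟨(j, k), hjk⟩) * nrm (z ⟨(j, l), hjl⟩)
        * nrm (z ⟨(k, j), hjk.symm⟩) ^ 2 * nrm (z ⟨(l, j), hjl.symm⟩) ^ 2 := by
  unfold zeta
  rw [sq (z ⟨(k, j), hjk.symm⟩), sq (z ⟨(l, j), hjl.symm⟩), hmul, hmul, hmul, hmul, hmul]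
  ring

lemma quad_le {a b c d B : ℝ} (ha : 1 ≤ a) (hb : 1 ≤ b) (hc : 1 ≤ c) (hd : 1 ≤ d)
    (h : a * b * c^2 * d^2 ≤ B) : a ≤ B ∧ b ≤ B ∧ c ≤ B ∧ d ≤ B := by
  have hc2 : 1 ≤ c^2 := by nlinarith
  have hd2 : 1 ≤ d^2 := by nlinarith
  have hbc : 1 ≤ b * c^2 := by nlinarith
  have h1 : 1 ≤ b * c^2 * d^2 := by nlinarith
  have hac : 1 ≤ a * c^2 := by nlinarith
  have h2 : 1 ≤ a * c^2 * d^2 := by nlinarith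
  have hab : 1 ≤ a * b := by nlinarith
  have h3 : 1 ≤ a * b * d^2 := by nlinarith
  have h4 : 1 ≤ a * b * c^2 := by nlinarith
  refine ⟨?_, ?_, ?_, ?_⟩
  · have := le_mul_of_one_le_right (by linarith : (0:ℝ) ≤ a) h1
    nlinarith [this, h]
  · have := le_mul_of_one_le_right (by linarith : (0:ℝ) ≤ b) h2
    nlinarith [this, h]
  · have hcc : c ≤ c^2 := by nlinarith
    have := le_mul_of_one_le_right (by nlinarith : (0:ℝ) ≤ c^2) h3
    nlinarith [this, h, hcc]
  · have hdd : d ≤ d^2 := by nlinarith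
    have := le_mul_of_one_le_right (by nlinarith : (0:ℝ) ≤ d^2) h4
    nlinarith [this, h, hdd]

include hnonneg hge1 hmul in
lemma factor_le (z : Pair → M) (hz : ∀ p, z p ≠ 0) (j k l : Fin 3) (hjk : j ≠ k)
    (hjl : j ≠ l) (B : ℝ) (hB : nrm (zeta z j k l hjk hjl) ≤ B) :
    nrm (z ⟨(j, k), hjk⟩) ≤ B ∧ nrm (z ⟨(j, l), hjl⟩) ≤ B
      ∧ nrm (z ⟨(k, j), hjk.symm⟩) ≤ B ∧ nrm (z ⟨(l, j), hjl.symm⟩) ≤ B := by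
  rw [nrm_zeta nrm hmul] at hB
  have h1 := hge1 _ (hz ⟨(j, k), hjk⟩)
  have h2 := hge1 _ (hz ⟨(j, l), hjl⟩)
  have h3 := hge1 _ (hz ⟨(k, j), hjk.symm⟩)
  have h4 := hge1 _ (hz ⟨(l, j), hjl.symm⟩)
  exact quad_le h1 h2 h3 h4 hB


variable (hnat : ∀ x : M, x ≠ 0 → ∃ n : ℕ, 1 ≤ n ∧ nrm x = n)
  (hcard : ∀ X : ℝ, 1 ≤ X → (((hfin X).toFinset.card) : ℝ) ≤ 16 * X)

include hnonneg hge1 hmul hnat hfin hcard in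
lemma mainj (B : ℝ) (hB : 2 ≤ B) (j k l : Fin 3) (hjk : j ≠ k) (hjl : j ≠ l) (hkl : k ≠ l) :
    ∑' z : {z : Pair → M // (∀ p, z p ≠ 0) ∧
          ∀ (j k l : Fin 3) (hjk : j ≠ k) (hjl : j ≠ l) (_ : k ≠ l),
            nrm (zeta (fun p => z p) j k l hjk hjl) ≤ B},
        (∏ p : Pair, (nrm ((z : Pair → M) p))⁻¹)
          * nrm (zeta (fun p => (z : Pair → M) p) j k l hjk hjl) ^ ((1:ℝ)/6)
      ≤ 300 * B ^ ((1:ℝ)/6) * (100 * Real.log B) ^ 5 := by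
  classical
  have hmem : ∀ x : M, x ∈ (hfin B).toFinset ↔ x ≠ 0 ∧ nrm x ≤ B :=
    fun x => Set.Finite.mem_toFinset _
  set s : Finset M := (hfin B).toFinset with hs
  -- the six pairs
  set q1 : Pair := ⟨(j,k),hjk⟩ with hq1
  set q2 : Pair := ⟨(j,l),hjl⟩ with hq2
  set q3 : Pair := ⟨(k,j),hjk.symm⟩ with hq3
  set q4 : Pair := ⟨(l,j),hjl.symm⟩ with hq4
  set q5 : Pair := ⟨(k,l),hkl⟩ with hq5
  set q6 : Pair := ⟨(l,k),hkl.symm⟩ with hq6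
  obtain ⟨e1,e2,e3,e4,e5,e6,e7,e8,e9,e10,e11,e12,e13,e14,e15⟩ := fin3_ne j k l hjk hjl hkl
  have ne12 : q1 ≠ q2 := fun h => e1 (congrArg Subtype.val h)
  have ne13 : q1 ≠ q3 := fun h => e2 (congrArg Subtype.val h)
  have ne14 : q1 ≠ q4 := fun h => e3 (congrArg Subtype.val h)
  have ne15 : q1 ≠ q5 := fun h => e4 (congrArg Subtype.val h)
  have ne16 : q1 ≠ q6 := fun h => e5 (congrArg Subtype.val h)
  have ne23 : q2 ≠ q3 := fun h => e6 (congrArg Subtype.val h)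
  have ne24 : q2 ≠ q4 := fun h => e7 (congrArg Subtype.val h)
  have ne25 : q2 ≠ q5 := fun h => e8 (congrArg Subtype.val h)
  have ne26 : q2 ≠ q6 := fun h => e9 (congrArg Subtype.val h)
  have ne34 : q3 ≠ q4 := fun h => e10 (congrArg Subtype.val h)
  have ne35 : q3 ≠ q5 := fun h => e11 (congrArg Subtype.val h)
  have ne36 : q3 ≠ q6 := fun h => e12 (congrArg Subtype.val h)
  have ne45 : q4 ≠ q5 := fun h => e13 (congrArg Subtype.val h)
  have ne46 : q4 ≠ q6 := fun h => e14 (congrArg Subtype.val h)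
  have ne56 : q5 ≠ q6 := fun h => e15 (congrArg Subtype.val h)
  have hcover : ∀ p : Pair, p = q1 ∨ p = q2 ∨ p = q3 ∨ p = q4 ∨ p = q5 ∨ p = q6 := by
    rintro ⟨⟨a,b⟩,hab⟩
    have h := fin3_cover j k l a b hjk hjl hkl hab
    simp only [hq1, hq2, hq3, hq4, hq5, hq6, Subtype.mk.injEq]
    exact h
  have hUniv : (Finset.univ : Finset Pair) = {q1,q2,q3,q4,q5,q6} := by
    ext p
    simp only [Finset.mem_univ, Finset.mem_insert, Finset.mem_singleton, true_iff]
    exact hcover p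
  have hprodF : ∀ F : Pair → ℝ, ∏ p : Pair, F p = F q1 * F q2 * F q3 * F q4 * F q5 * F q6 := by
    intro F
    rw [show (Finset.univ : Finset Pair) = {q1,q2,q3,q4,q5,q6} from hUniv,
      Finset.prod_insert (by simp [ne12, ne13, ne14, ne15, ne16]),
      Finset.prod_insert (by simp [ne23, ne24, ne25, ne26]),
      Finset.prod_insert (by simp [ne34, ne35, ne36]),
      Finset.prod_insert (by simp [ne45, ne46]),
      Finset.prod_pair ne56]
    ring
  -- membership of coordinates
  have hzmem : ∀ z : {z : Pair → M // (∀ p, z p ≠ 0) ∧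
      ∀ (j k l : Fin 3) (hjk : j ≠ k) (hjl : j ≠ l) (_ : k ≠ l),
        nrm (zeta (fun p => z p) j k l hjk hjl) ≤ B}, ∀ p : Pair, z.1 p ∈ s := by
    rintro z ⟨⟨a,b⟩,hab⟩
    obtain ⟨c, hac, hbc⟩ := fin3_third a b hab
    have hcon := z.2.2 a b c hab hac hbc
    have hle := (factor_le nrm hnonneg hge1 hmul _ z.2.1 a b c hab hac B hcon).1
    rw [hs, Set.Finite.mem_toFinset]
    exact ⟨z.2.1 _, hle⟩
  haveI : Finite {z : Pair → M // (∀ p, z p ≠ 0) ∧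
      ∀ (j k l : Fin 3) (hjk : j ≠ k) (hjl : j ≠ l) (_ : k ≠ l),
        nrm (zeta (fun p => z p) j k l hjk hjl) ≤ B} := by
    apply Finite.of_injective
      (fun z => (fun p => (⟨z.1 p, hzmem z p⟩ : {x // x ∈ s}) : Pair → {x // x ∈ s}))
    intro z w h
    apply Subtype.ext
    funext p
    exact congrArg Subtype.val (congrFun h p)
  haveI : Fintype {z : Pair → M // (∀ p, z p ≠ 0) ∧
      ∀ (j k l : Fin 3) (hjk : j ≠ k) (hjl : j ≠ l) (_ : k ≠ l),
        nrm (zeta (fun p => z p) j k l hjk hjl) ≤ B} := Fintype.ofFinite _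
  rw [tsum_fintype]
  have hBpos : (0:ℝ) < B := by linarith
  have hS1 : ∀ x : {x // x ∈ s}, 1 ≤ nrm x.1 := by
    intro x
    exact hge1 _ ((hmem x.1).mp x.2).1
  have hS0 : ∀ x : {x // x ∈ s}, 0 < nrm x.1 := fun x => lt_of_lt_of_le one_pos (hS1 x)
  -- the two basic sums over s
  have hSA : ∀ Y : ℝ, 0 ≤ Y →
      ∑ x : {x // x ∈ s}, (if nrm x.1 ≤ Y then nrm x.1 ^ (-(5/6):ℝ) else 0)
        ≤ 300 * Y ^ ((1:ℝ)/6) := by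
    intro Y hY
    rw [Finset.sum_coe_sort s (fun m => if nrm m ≤ Y then nrm m ^ (-(5/6):ℝ) else 0),
      ← Finset.sum_filter]
    have hsub : s.filter (fun m => nrm m ≤ Y) ⊆ (hfin Y).toFinset := by
      intro x hx
      rw [Finset.mem_filter, hmem] at hx
      exact (Set.Finite.mem_toFinset _).mpr ⟨hx.1.1, hx.2⟩
    calc ∑ x ∈ s.filter (fun m => nrm m ≤ Y), nrm x ^ (-(5/6):ℝ)
        ≤ ∑ x ∈ (hfin Y).toFinset, nrm x ^ (-(5/6):ℝ) :=
          Finset.sum_le_sum_of_subset_of_nonneg hsub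
            (fun x _ _ => Real.rpow_nonneg (hnonneg x) _)
      _ ≤ 300 * Y ^ ((1:ℝ)/6) := sumPowR nrm hge1 hnat hfin hcard hY
  have hL : ∑ x : {x // x ∈ s}, (nrm x.1)⁻¹ ≤ 100 * Real.log B := by
    rw [Finset.sum_coe_sort s (fun m => (nrm m)⁻¹)]
    exact sumInvR nrm hge1 hnat hfin hcard hB
  have hL0 : 0 ≤ ∑ x : {x // x ∈ s}, (nrm x.1)⁻¹ :=
    Finset.sum_nonneg (fun x _ => inv_nonneg.mpr (hnonneg _))
  -- step 1 : inject into the 6-fold product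
  refine le_trans (sum_le_sum_inj _
    (fun v : {x // x ∈ s} × {x // x ∈ s} × {x // x ∈ s} × {x // x ∈ s} × {x // x ∈ s} × {x // x ∈ s} =>
      (if nrm (v.2.2.2.2.2).1 * (nrm v.1.1 * nrm (v.2.1).1 ^ 2 * nrm (v.2.2.1).1 ^ 2) ≤ B
        then nrm (v.2.2.2.2.2).1 ^ (-(5/6):ℝ) else 0)
      * (nrm v.1.1 ^ (-(5/6):ℝ) * nrm (v.2.1).1 ^ (-(2/3):ℝ) * nrm (v.2.2.1).1 ^ (-(2/3):ℝ)
          * (nrm (v.2.2.2.1).1)⁻¹ * (nrm (v.2.2.2.2.1).1)⁻¹))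
    (fun z => (⟨z.1 q2, hzmem z q2⟩, ⟨z.1 q3, hzmem z q3⟩, ⟨z.1 q4, hzmem z q4⟩,
      ⟨z.1 q5, hzmem z q5⟩, ⟨z.1 q6, hzmem z q6⟩, ⟨z.1 q1, hzmem z q1⟩))
    ?_ ?_ ?_) ?_
  · -- injectivity
    intro z w h
    have h2 : z.1 q2 = w.1 q2 := congrArg (fun v => (v.1 : {x // x ∈ s}).1) h
    have h3 : z.1 q3 = w.1 q3 := congrArg (fun v => (v.2.1 : {x // x ∈ s}).1) h
    have h4 : z.1 q4 = w.1 q4 := congrArg (fun v => (v.2.2.1 : {x // x ∈ s}).1) h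
    have h5 : z.1 q5 = w.1 q5 := congrArg (fun v => (v.2.2.2.1 : {x // x ∈ s}).1) h
    have h6 : z.1 q6 = w.1 q6 := congrArg (fun v => (v.2.2.2.2.1 : {x // x ∈ s}).1) h
    have h1 : z.1 q1 = w.1 q1 := congrArg (fun v => (v.2.2.2.2.2 : {x // x ∈ s}).1) h
    apply Subtype.ext
    funext p
    rcases hcover p with hp|hp|hp|hp|hp|hp
    · rw [hp]; exact h1
    · rw [hp]; exact h2
    · rw [hp]; exact h3
    · rw [hp]; exact h4
    · rw [hp]; exact h5
    · rw [hp]; exact h6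
  · -- nonnegativity of g
    intro v
    apply mul_nonneg
    · split
      · exact Real.rpow_nonneg (hnonneg _) _
      · exact le_refl 0
    · refine mul_nonneg (mul_nonneg (mul_nonneg (mul_nonneg ?_ ?_) ?_) ?_) ?_
      · exact Real.rpow_nonneg (hnonneg _) _
      · exact Real.rpow_nonneg (hnonneg _) _
      · exact Real.rpow_nonneg (hnonneg _) _
      · exact inv_nonneg.mpr (hnonneg _)
      · exact inv_nonneg.mpr (hnonneg _)
  · -- pointwise bound
    intro z
    show ((∏ p : Pair, (nrm (z.1 p))⁻¹)
        * nrm (zeta (fun p => z.1 p) j k l hjk hjl) ^ ((1:ℝ)/6))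
      ≤ (if nrm (z.1 q1) * (nrm (z.1 q2) * nrm (z.1 q3) ^ 2 * nrm (z.1 q4) ^ 2) ≤ B
          then nrm (z.1 q1) ^ (-(5/6):ℝ) else 0)
        * (nrm (z.1 q2) ^ (-(5/6):ℝ) * nrm (z.1 q3) ^ (-(2/3):ℝ) * nrm (z.1 q4) ^ (-(2/3):ℝ)
            * (nrm (z.1 q5))⁻¹ * (nrm (z.1 q6))⁻¹)
    have hzt := z.2.2 j k l hjk hjl hkl
    rw [nrm_zeta nrm hmul] at hzt
    rw [← hq1, ← hq2, ← hq3, ← hq4] at hzt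
    have hcond : nrm (z.1 q1) * (nrm (z.1 q2) * nrm (z.1 q3) ^ 2 * nrm (z.1 q4) ^ 2) ≤ B :=
      le_of_eq_of_le (by ring) hzt
    rw [if_pos hcond, hprodF (fun p => (nrm (z.1 p))⁻¹)]
    have hz2 := nrm_zeta nrm hmul (fun p => z.1 p) j k l hjk hjl
    rw [← hq1, ← hq2, ← hq3, ← hq4] at hz2
    rw [hz2]
    exact le_of_eq (aux_alg (lt_of_lt_of_le one_pos (hge1 _ (z.2.1 q1)))
      (lt_of_lt_of_le one_pos (hge1 _ (z.2.1 q2))) (lt_of_lt_of_le one_pos (hge1 _ (z.2.1 q3)))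
      (lt_of_lt_of_le one_pos (hge1 _ (z.2.1 q4))) (lt_of_lt_of_le one_pos (hge1 _ (z.2.1 q5)))
      (lt_of_lt_of_le one_pos (hge1 _ (z.2.1 q6))))
  -- now the 6-fold sum
  have hinner : ∀ x2 x3 x4 x5 x6 : {x // x ∈ s},
      (∑ x1 : {x // x ∈ s},
        (if nrm x1.1 * (nrm x2.1 * nrm x3.1 ^ 2 * nrm x4.1 ^ 2) ≤ B
          then nrm x1.1 ^ (-(5/6):ℝ) else 0)
        * (nrm x2.1 ^ (-(5/6):ℝ) * nrm x3.1 ^ (-(2/3):ℝ) * nrm x4.1 ^ (-(2/3):ℝ)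
            * (nrm x5.1)⁻¹ * (nrm x6.1)⁻¹))
      ≤ 300 * B ^ ((1:ℝ)/6) * (nrm x2.1)⁻¹ * (nrm x3.1)⁻¹ * (nrm x4.1)⁻¹ * (nrm x5.1)⁻¹
          * (nrm x6.1)⁻¹ := by
    intro x2 x3 x4 x5 x6
    have hD : (0:ℝ) < nrm x2.1 * nrm x3.1 ^ 2 * nrm x4.1 ^ 2 :=
      mul_pos (mul_pos (hS0 x2) (pow_pos (hS0 x3) 2)) (pow_pos (hS0 x4) 2)
    have hR0 : (0:ℝ) ≤ nrm x2.1 ^ (-(5/6):ℝ) * nrm x3.1 ^ (-(2/3):ℝ) * nrm x4.1 ^ (-(2/3):ℝ)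
        * (nrm x5.1)⁻¹ * (nrm x6.1)⁻¹ :=
      mul_nonneg (mul_nonneg (mul_nonneg (mul_nonneg (Real.rpow_nonneg (hnonneg _) _)
        (Real.rpow_nonneg (hnonneg _) _)) (Real.rpow_nonneg (hnonneg _) _))
        (inv_nonneg.mpr (hnonneg _))) (inv_nonneg.mpr (hnonneg _))
    rw [← Finset.sum_mul]
    have hcongr : (∑ x1 : {x // x ∈ s},
        if nrm x1.1 * (nrm x2.1 * nrm x3.1 ^ 2 * nrm x4.1 ^ 2) ≤ B
          then nrm x1.1 ^ (-(5/6):ℝ) else 0)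
        = ∑ x1 : {x // x ∈ s},
            if nrm x1.1 ≤ B / (nrm x2.1 * nrm x3.1 ^ 2 * nrm x4.1 ^ 2)
              then nrm x1.1 ^ (-(5/6):ℝ) else 0 :=
      Finset.sum_congr rfl (fun x _ =>
        if_congr (le_div_iff₀ hD).symm rfl rfl)
    rw [hcongr]
    calc (∑ x1 : {x // x ∈ s},
          if nrm x1.1 ≤ B / (nrm x2.1 * nrm x3.1 ^ 2 * nrm x4.1 ^ 2)
            then nrm x1.1 ^ (-(5/6):ℝ) else 0)
          * (nrm x2.1 ^ (-(5/6):ℝ) * nrm x3.1 ^ (-(2/3):ℝ) * nrm x4.1 ^ (-(2/3):ℝ)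
              * (nrm x5.1)⁻¹ * (nrm x6.1)⁻¹)
        ≤ (300 * (B / (nrm x2.1 * nrm x3.1 ^ 2 * nrm x4.1 ^ 2)) ^ ((1:ℝ)/6))
          * (nrm x2.1 ^ (-(5/6):ℝ) * nrm x3.1 ^ (-(2/3):ℝ) * nrm x4.1 ^ (-(2/3):ℝ)
              * (nrm x5.1)⁻¹ * (nrm x6.1)⁻¹) :=
          mul_le_mul_of_nonneg_right (hSA _ (le_of_lt (div_pos hBpos hD))) hR0
      _ = 300 * B ^ ((1:ℝ)/6) * (nrm x2.1)⁻¹ * (nrm x3.1)⁻¹ * (nrm x4.1)⁻¹ * (nrm x5.1)⁻¹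
            * (nrm x6.1)⁻¹ :=
          aux_alg2 hBpos (hS0 x2) (hS0 x3) (hS0 x4) (hS0 x5) (hS0 x6)
  simp only [Fintype.sum_prod_type]
  refine le_trans (Finset.sum_le_sum fun x2 _ => Finset.sum_le_sum fun x3 _ =>
    Finset.sum_le_sum fun x4 _ => Finset.sum_le_sum fun x5 _ =>
    Finset.sum_le_sum fun x6 _ => hinner x2 x3 x4 x5 x6) ?_
  trans (300 * B ^ ((1:ℝ)/6) * (∑ x : {x // x ∈ s}, (nrm x.1)⁻¹) ^ 5)
  · apply le_of_eq
    simp only [← Finset.sum_mul, ← Finset.mul_sum]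
    ring
  · have h5 : (∑ x : {x // x ∈ s}, (nrm x.1)⁻¹) ^ 5 ≤ (100 * Real.log B) ^ 5 :=
      pow_le_pow_left₀ hL0 hL 5
    have hc : (0:ℝ) ≤ 300 * B ^ ((1:ℝ)/6) := by positivity
    exact mul_le_mul_of_nonneg_left h5 hc

end Main

section KFacts
variable {K : Type} [Field K] [NumberField K]
  (hdeg : Module.finrank ℚ K = 2)
  (ι : K →+* ℂ) (himag : ∃ x : K, (ι x).im ≠ 0)

include hdeg himag in
lemma embeddings_pair : ∀ φ : K →+* ℂ, φ = ι ∨ φ = (starRingEnd ℂ).comp ι := by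
  classical
  have hcard : Fintype.card (K →+* ℂ) = 2 := by
    rw [NumberField.Embeddings.card K ℂ, hdeg]
  have hne : ι ≠ (starRingEnd ℂ).comp ι := by
    intro h
    obtain ⟨y, hy⟩ := himag
    have h2 : ι y = ((starRingEnd ℂ).comp ι) y := DFunLike.congr_fun h y
    exact hy (Complex.conj_eq_iff_im.mp h2.symm)
  have huniv : (Finset.univ : Finset (K →+* ℂ)) = {ι, (starRingEnd ℂ).comp ι} := by
    symm
    apply Finset.eq_of_subset_of_card_le (Finset.subset_univ _)
    rw [Finset.card_univ, hcard, Finset.card_insert_of_notMem (by simpa using hne),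
      Finset.card_singleton]
  intro φ
  have : φ ∈ (Finset.univ : Finset (K →+* ℂ)) := Finset.mem_univ φ
  rw [huniv, Finset.mem_insert, Finset.mem_singleton] at this
  exact this

include hdeg himag in
lemma normProd : ∀ x : K, ((Algebra.norm ℚ x : ℚ) : ℂ) = ι x * (starRingEnd ℂ) (ι x) := by
  classical
  intro x
  have hcard : Fintype.card (K →+* ℂ) = 2 := by
    rw [NumberField.Embeddings.card K ℂ, hdeg]
  have hne : ι ≠ (starRingEnd ℂ).comp ι := by
    intro h
    obtain ⟨y, hy⟩ := himag
    have h2 : ι y = ((starRingEnd ℂ).comp ι) y := DFunLike.congr_fun h y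
    exact hy (Complex.conj_eq_iff_im.mp h2.symm)
  have huniv : (Finset.univ : Finset (K →+* ℂ)) = {ι, (starRingEnd ℂ).comp ι} := by
    symm
    apply Finset.eq_of_subset_of_card_le (Finset.subset_univ _)
    rw [Finset.card_univ, hcard, Finset.card_insert_of_notMem (by simpa using hne),
      Finset.card_singleton]
  have h1 : algebraMap ℚ ℂ (Algebra.norm ℚ x) = ∏ σ : K →ₐ[ℚ] ℂ, σ x :=
    Algebra.norm_eq_prod_embeddings ℚ ℂ x
  have h2 : ∏ σ : K →ₐ[ℚ] ℂ, σ x = ∏ φ : K →+* ℂ, φ x :=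
    Fintype.prod_equiv (RingHom.equivRatAlgHom K ℂ).symm _ _ (fun σ => rfl)
  have h3 : ∏ φ : K →+* ℂ, φ x = ι x * ((starRingEnd ℂ).comp ι) x := by
    rw [huniv, Finset.prod_pair hne]
  have h4 : ((Algebra.norm ℚ x : ℚ) : ℂ) = algebraMap ℚ ℂ (Algebra.norm ℚ x) := by
    simp [eq_ratCast]
  rw [h4, h1, h2, h3]
  rfl

end KFacts

section KDerived
variable {K : Type} [Field K] [NumberField K]
  (hdeg : Module.finrank ℚ K = 2)
  (ι : K →+* ℂ) (himag : ∃ x : K, (ι x).im ≠ 0)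
  (nrm : 𝓞 K → ℝ) (hnrm : ∀ x : 𝓞 K, nrm x = ‖ι (x : K)‖ ^ 2)

include hdeg himag hnrm in
lemma nrm_int : ∀ x : 𝓞 K, nrm x = ((Algebra.norm ℤ x : ℤ) : ℝ) := by
  intro x
  have h1 := normProd hdeg ι himag (x : K)
  rw [Complex.mul_conj] at h1
  have h3 : ((Algebra.norm ℚ ((x : K)) : ℚ) : ℝ) = Complex.normSq (ι (x:K)) := by
    exact_mod_cast h1
  rw [← Complex.sq_norm] at h3
  rw [hnrm, ← h3, ← Algebra.coe_norm_int]
  push_cast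
  ring
include hdeg himag hnrm in
lemma nrm_ge1 : ∀ x : 𝓞 K, x ≠ 0 → 1 ≤ nrm x := by
  intro x hx
  have hpos : 0 < nrm x := by
    rw [hnrm]
    have : (x : K) ≠ 0 := by
      simpa using hx
    have h2 : ι (x : K) ≠ 0 := fun h => this (ι.injective (by rw [h, map_zero]))
    exact pow_pos (norm_pos_iff.mpr h2) 2
  have hint := nrm_int hdeg ι himag nrm hnrm x
  rw [hint] at hpos ⊢
  have : (0:ℤ) < Algebra.norm ℤ x := by exact_mod_cast hpos
  have : (1:ℤ) ≤ Algebra.norm ℤ x := this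
  exact_mod_cast this

include hdeg himag hnrm in
lemma nrm_nat : ∀ x : 𝓞 K, x ≠ 0 → ∃ n : ℕ, 1 ≤ n ∧ nrm x = n := by
  intro x hx
  have h1 := nrm_ge1 hdeg ι himag nrm hnrm x hx
  have hint := nrm_int hdeg ι himag nrm hnrm x
  refine ⟨(Algebra.norm ℤ x).toNat, ?_, ?_⟩
  · have : (1:ℤ) ≤ Algebra.norm ℤ x := by
      by_contra h
      push_neg at h
      have : ((Algebra.norm ℤ x : ℤ):ℝ) ≤ 0 := by exact_mod_cast Int.lt_add_one_iff.mp h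
      rw [← hint] at this
      linarith
    omega
  · rw [hint]
    have : (0:ℤ) ≤ Algebra.norm ℤ x := by
      by_contra h
      push_neg at h
      have : ((Algebra.norm ℤ x : ℤ):ℝ) < 0 := by exact_mod_cast h
      rw [← hint] at this
      linarith
    exact_mod_cast (Int.toNat_of_nonneg this).symm

include hdeg himag hnrm in
lemma nrm_sep : ∀ x y : 𝓞 K, x ≠ y →
    1 ≤ ‖ι ((x : K)) - ι ((y : K))‖ := by
  intro x y hxy
  have h1 := nrm_ge1 hdeg ι himag nrm hnrm (x - y) (sub_ne_zero.mpr hxy)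
  rw [hnrm] at h1
  have h2 : ((x - y : 𝓞 K) : K) = (x : K) - (y : K) := by push_cast; ring
  rw [h2, map_sub] at h1
  nlinarith [norm_nonneg (ι (x:K) - ι (y:K)), h1]

include hdeg himag hnrm in
lemma nrm_fin : ∀ X : ℝ, {x : 𝓞 K | x ≠ 0 ∧ nrm x ≤ X}.Finite := by
  intro X
  have hembs := embeddings_pair hdeg ι himag
  apply Set.Finite.of_finite_image (f := fun x : 𝓞 K => (x : K))
  · apply Set.Finite.subset
      (NumberField.Embeddings.finite_of_norm_le K ℂ (Real.sqrt (max X 0)))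
    rintro y ⟨x, ⟨hx0, hxX⟩, rfl⟩
    refine ⟨RingOfIntegers.isIntegral_coe x, ?_⟩
    intro φ
    have habs : ‖ι (x : K)‖ ≤ Real.sqrt (max X 0) := by
      rw [show ‖ι (x:K)‖ = Real.sqrt (‖ι (x:K)‖ ^ 2) from
        (Real.sqrt_sq (norm_nonneg _)).symm]
      apply Real.sqrt_le_sqrt
      rw [← hnrm]
      exact le_max_of_le_left hxX
    rcases hembs φ with rfl | rfl
    · simpa using habs
    · simpa using habs
  · intro a _ b _ h
    dsimp at h
    exact_mod_cast h

end KDerived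

/-- estimate of the error term `R(B, r)` for `r = (1,…,1)`: for `B ≥ 2`,
`Σ_{z ∈ (𝓞_K∖{0})⁶ : ‖ζ_j‖ ≤ B} (∏_{j≠k} ‖z_{j,k}‖⁻¹)·max_j ‖ζ_j‖^{1/6} = O(B^{1/6}(log B)⁵)`. -/
theorem stmt14 (K : Type) [Field K] [NumberField K]
    (hdeg : Module.finrank ℚ K = 2)
    (ι : K →+* ℂ) (himag : ∃ x : K, (ι x).im ≠ 0)
    (nrm : 𝓞 K → ℝ) (hnrm : ∀ x : 𝓞 K, nrm x = ‖ι (x : K)‖ ^ 2) :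
    ∃ C > (0 : ℝ), ∀ B : ℝ, B ≥ 2 →
      (∑' z : {z : Pair → 𝓞 K // (∀ p, z p ≠ 0) ∧
            ∀ (j k l : Fin 3) (hjk : j ≠ k) (hjl : j ≠ l) (_ : k ≠ l),
              nrm (zeta (fun p => z p) j k l hjk hjl) ≤ B},
          (∏ p : Pair, (nrm ((z : Pair → 𝓞 K) p))⁻¹) *
            max (nrm (zeta (fun p => (z : Pair → 𝓞 K) p) 0 1 2 (by decide) (by decide))
                  ^ ((1 : ℝ) / 6))
              (max (nrm (zeta (fun p => (z : Pair → 𝓞 K) p) 1 2 0 (by decide) (by decide))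
                      ^ ((1 : ℝ) / 6))
                (nrm (zeta (fun p => (z : Pair → 𝓞 K) p) 2 0 1 (by decide) (by decide))
                      ^ ((1 : ℝ) / 6))))
        ≤ C * B ^ ((1 : ℝ) / 6) * Real.log B ^ 5 := by
  classical
  have hnonneg : ∀ x : 𝓞 K, 0 ≤ nrm x := fun x => by rw [hnrm]; positivity
  have hge1 := nrm_ge1 hdeg ι himag nrm hnrm
  have hmul : ∀ x y : 𝓞 K, nrm (x * y) = nrm x * nrm y := by
    intro x y
    simp [hnrm, map_mul, mul_pow]
  have hnat := nrm_nat hdeg ι himag nrm hnrm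
  have hfin := nrm_fin hdeg ι himag nrm hnrm
  have hcard : ∀ X : ℝ, 1 ≤ X → (((hfin X).toFinset.card : ℕ) : ℝ) ≤ 16 * X := by
    intro X hX
    apply cardBound nrm (fun x : 𝓞 K => ι (x : K)) (nrm_sep hdeg ι himag nrm hnrm)
      (fun x => (hnrm x).symm) _ X hX
    intro x hx
    exact ((Set.Finite.mem_toFinset _).mp hx).2
  refine ⟨9000000000000, by norm_num, ?_⟩
  intro B hB
  -- finiteness of the index type
  have hzmem : ∀ z : {z : Pair → 𝓞 K // (∀ p, z p ≠ 0) ∧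
      ∀ (j k l : Fin 3) (hjk : j ≠ k) (hjl : j ≠ l) (_ : k ≠ l),
        nrm (zeta (fun p => z p) j k l hjk hjl) ≤ B},
      ∀ p : Pair, z.1 p ∈ (hfin B).toFinset := by
    rintro z ⟨⟨a,b⟩,hab⟩
    obtain ⟨c, hac, hbc⟩ := fin3_third a b hab
    have hcon := z.2.2 a b c hab hac hbc
    have hle := (factor_le nrm hnonneg hge1 hmul _ z.2.1 a b c hab hac B hcon).1
    rw [Set.Finite.mem_toFinset]
    exact ⟨z.2.1 _, hle⟩
  haveI : Finite {z : Pair → 𝓞 K // (∀ p, z p ≠ 0) ∧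
      ∀ (j k l : Fin 3) (hjk : j ≠ k) (hjl : j ≠ l) (_ : k ≠ l),
        nrm (zeta (fun p => z p) j k l hjk hjl) ≤ B} := by
    apply Finite.of_injective
      (fun z => (fun p => (⟨z.1 p, hzmem z p⟩ : {x // x ∈ (hfin B).toFinset})
        : Pair → {x // x ∈ (hfin B).toFinset}))
    intro z w h
    apply Subtype.ext
    funext p
    exact congrArg Subtype.val (congrFun h p)
  haveI : Fintype {z : Pair → 𝓞 K // (∀ p, z p ≠ 0) ∧
      ∀ (j k l : Fin 3) (hjk : j ≠ k) (hjl : j ≠ l) (_ : k ≠ l),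
        nrm (zeta (fun p => z p) j k l hjk hjl) ≤ B} := Fintype.ofFinite _
  have h0 := mainj nrm hnonneg hge1 hmul hfin hnat hcard B hB 0 1 2
    (by decide) (by decide) (by decide)
  have h1 := mainj nrm hnonneg hge1 hmul hfin hnat hcard B hB 1 2 0
    (by decide) (by decide) (by decide)
  have h2 := mainj nrm hnonneg hge1 hmul hfin hnat hcard B hB 2 0 1
    (by decide) (by decide) (by decide)
  rw [tsum_fintype] at h0 h1 h2 ⊢
  calc ∑ z : {z : Pair → 𝓞 K // (∀ p, z p ≠ 0) ∧
            ∀ (j k l : Fin 3) (hjk : j ≠ k) (hjl : j ≠ l) (_ : k ≠ l),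
              nrm (zeta (fun p => z p) j k l hjk hjl) ≤ B},
          (∏ p : Pair, (nrm ((z : Pair → 𝓞 K) p))⁻¹) *
            max (nrm (zeta (fun p => (z : Pair → 𝓞 K) p) 0 1 2 (by decide) (by decide))
                  ^ ((1 : ℝ) / 6))
              (max (nrm (zeta (fun p => (z : Pair → 𝓞 K) p) 1 2 0 (by decide) (by decide))
                      ^ ((1 : ℝ) / 6))
                (nrm (zeta (fun p => (z : Pair → 𝓞 K) p) 2 0 1 (by decide) (by decide))
                      ^ ((1 : ℝ) / 6)))
      ≤ ∑ z : {z : Pair → 𝓞 K // (∀ p, z p ≠ 0) ∧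
            ∀ (j k l : Fin 3) (hjk : j ≠ k) (hjl : j ≠ l) (_ : k ≠ l),
              nrm (zeta (fun p => z p) j k l hjk hjl) ≤ B},
          ((∏ p : Pair, (nrm ((z : Pair → 𝓞 K) p))⁻¹) *
              nrm (zeta (fun p => (z : Pair → 𝓞 K) p) 0 1 2 (by decide) (by decide))
                ^ ((1 : ℝ) / 6)
            + (∏ p : Pair, (nrm ((z : Pair → 𝓞 K) p))⁻¹) *
              nrm (zeta (fun p => (z : Pair → 𝓞 K) p) 1 2 0 (by decide) (by decide))
                ^ ((1 : ℝ) / 6)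
            + (∏ p : Pair, (nrm ((z : Pair → 𝓞 K) p))⁻¹) *
              nrm (zeta (fun p => (z : Pair → 𝓞 K) p) 2 0 1 (by decide) (by decide))
                ^ ((1 : ℝ) / 6)) := by
        apply Finset.sum_le_sum
        intro z _
        have hP : 0 ≤ ∏ p : Pair, (nrm ((z : Pair → 𝓞 K) p))⁻¹ :=
          Finset.prod_nonneg (fun p _ => inv_nonneg.mpr (hnonneg _))
        have ha0 : 0 ≤ nrm (zeta (fun p => (z : Pair → 𝓞 K) p) 0 1 2 (by decide) (by decide))
            ^ ((1 : ℝ) / 6) := Real.rpow_nonneg (hnonneg _) _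
        have hb0 : 0 ≤ nrm (zeta (fun p => (z : Pair → 𝓞 K) p) 1 2 0 (by decide) (by decide))
            ^ ((1 : ℝ) / 6) := Real.rpow_nonneg (hnonneg _) _
        have hc0 : 0 ≤ nrm (zeta (fun p => (z : Pair → 𝓞 K) p) 2 0 1 (by decide) (by decide))
            ^ ((1 : ℝ) / 6) := Real.rpow_nonneg (hnonneg _) _
        have hmax : max (nrm (zeta (fun p => (z : Pair → 𝓞 K) p) 0 1 2 (by decide) (by decide))
              ^ ((1 : ℝ) / 6))
            (max (nrm (zeta (fun p => (z : Pair → 𝓞 K) p) 1 2 0 (by decide) (by decide))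
                ^ ((1 : ℝ) / 6))
              (nrm (zeta (fun p => (z : Pair → 𝓞 K) p) 2 0 1 (by decide) (by decide))
                ^ ((1 : ℝ) / 6)))
            ≤ nrm (zeta (fun p => (z : Pair → 𝓞 K) p) 0 1 2 (by decide) (by decide))
                ^ ((1 : ℝ) / 6)
              + nrm (zeta (fun p => (z : Pair → 𝓞 K) p) 1 2 0 (by decide) (by decide))
                ^ ((1 : ℝ) / 6)
              + nrm (zeta (fun p => (z : Pair → 𝓞 K) p) 2 0 1 (by decide) (by decide))
                ^ ((1 : ℝ) / 6) := by
          apply max_le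
          · linarith
          · apply max_le <;> linarith
        calc (∏ p : Pair, (nrm ((z : Pair → 𝓞 K) p))⁻¹) * max _ (max _ _)
            ≤ (∏ p : Pair, (nrm ((z : Pair → 𝓞 K) p))⁻¹) *
              (nrm (zeta (fun p => (z : Pair → 𝓞 K) p) 0 1 2 (by decide) (by decide))
                  ^ ((1 : ℝ) / 6)
                + nrm (zeta (fun p => (z : Pair → 𝓞 K) p) 1 2 0 (by decide) (by decide))
                  ^ ((1 : ℝ) / 6)
                + nrm (zeta (fun p => (z : Pair → 𝓞 K) p) 2 0 1 (by decide) (by decide))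
                  ^ ((1 : ℝ) / 6)) := mul_le_mul_of_nonneg_left hmax hP
          _ = _ := by ring
    _ = _ + _ + _ := by rw [Finset.sum_add_distrib, Finset.sum_add_distrib]
    _ ≤ 300 * B ^ ((1:ℝ)/6) * (100 * Real.log B) ^ 5
        + 300 * B ^ ((1:ℝ)/6) * (100 * Real.log B) ^ 5
        + 300 * B ^ ((1:ℝ)/6) * (100 * Real.log B) ^ 5 := add_le_add (add_le_add h0 h1) h2
    _ = 9000000000000 * B ^ ((1 : ℝ) / 6) * Real.log B ^ 5 := by ring
end
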